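/- arXiv:2401.14660 — 4 statements merged into one kernel-verified Lean document; each statement's English description precedes it below -/
import Mathlib

section
/- Let a ∈ (0,3/10], let f ∈ F⁺ be a minimizer of H⁺ on F⁺ (i.e., H⁺(f) ≤ H⁺(φ) for all φ ∈ F⁺), and let p > 0. Then: (i) if for every ε > 0 the derivative f' is neither a.e. equal to a nor a.e. equal to −a on (p, p+ε), then g_a((1+f(p))/p) = g_a((1−f(p))/p); (ii) the same equality holds if for every ε > 0, f' is neither a.e. equal to a nor a.e. equal to −a on (p−ε, p); (iii) if for some ε > 0, f' = −a a.e. on (p−ε,p) and f' = a a.e. on (p,p+ε), then g_a((1+f(p))/p) ≥ g_a((1−f(p))/p); (iv) if for some ε > 0, f' = a a.e. on (p−ε,p) and f' = −a a.e. on (p,p+ε), then g_a((1+f(p))/p) ≤ g_a((1−f(p))/p). -/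
open MeasureTheory Filter Set
open scoped ENNReal

/-- The kernel `h_a(y,r) := (y² − r² − (a⁻¹ − a)·y·r)/(y² + r²)²`. -/
noncomputable def hker (a y r : ℝ) : ℝ :=
  (y ^ 2 - r ^ 2 - (a⁻¹ - a) * y * r) / (y ^ 2 + r ^ 2) ^ 2

/-- `g_a(s) := (2s³ + 3A·s² − 6s − A)/(1 + s²)³` with `A := a⁻¹ − a`. -/
noncomputable def gfun (a s : ℝ) : ℝ :=
  (2 * s ^ 3 + 3 * (a⁻¹ - a) * s ^ 2 - 6 * s - (a⁻¹ - a)) / (1 + s ^ 2) ^ 3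

/-- Membership in `F⁺`: `f : [0,∞) → [0,∞)` is Lipschitz with constant `a`, `f(0) = 1`,
and has right derivative `−a` at `0`. -/
def memFplus (a : ℝ) (f : ℝ → ℝ) : Prop :=
  (∀ x : ℝ, 0 ≤ x → 0 ≤ f x) ∧
  (∀ x y : ℝ, 0 ≤ x → 0 ≤ y → |f x - f y| ≤ a * |x - y|) ∧
  f 0 = 1 ∧
  HasDerivWithinAt f (-a) (Ici (0:ℝ)) 0

/-- `H⁺(f) := ∫₀^∞ [ h_a(y, 1+f(y)) + h_a(y, 1−f(y)) ] dy`, valued in `ℝ ∪ {+∞}`. -/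
noncomputable def Hplus (a : ℝ) (f : ℝ → ℝ) : EReal :=
  ((∫ y in Ioi (0:ℝ), hker a y (1 + f y) : ℝ) : EReal) +
    ((∫⁻ y in Ioi (0:ℝ), ENNReal.ofReal (hker a y (1 - f y)) : ℝ≥0∞) : EReal)

/-- `f' = c` almost everywhere on the set `s`. -/
def derivAEeq (f : ℝ → ℝ) (s : Set ℝ) (c : ℝ) : Prop :=
  ∀ᵐ y ∂(volume.restrict s), deriv f y = c

lemma le_inv_self {a : ℝ} (ha : 0 < a) (ha1 : a ≤ 1) : a ≤ a⁻¹ := by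
  have h := mul_inv_cancel₀ ha.ne'
  nlinarith [sq_nonneg (a - a⁻¹), sq_nonneg a]

/-- derivative of `hker` in the second variable. -/
noncomputable def Dker (a y r : ℝ) : ℝ :=
  (2 * r ^ 3 + 3 * (a⁻¹ - a) * y * r ^ 2 - 6 * r * y ^ 2 - (a⁻¹ - a) * y ^ 3) /
    (y ^ 2 + r ^ 2) ^ 3

lemma sq_add_sq_pos_of_left {y r : ℝ} (hy : 0 < y) : 0 < y ^ 2 + r ^ 2 := by positivity

lemma hker_factor {a y r : ℝ} (ha : a ≠ 0) :
    y ^ 2 - r ^ 2 - (a⁻¹ - a) * y * r = (a * y - r) * (y / a + r) := by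
  field_simp
  ring

lemma hker_nonneg {a y r : ℝ} (ha : 0 < a) (ha1 : a ≤ 1) (hy : 0 < y)
    (hr1 : r ≤ a * y) (hr2 : -(a * y) ≤ r) : 0 ≤ hker a y r := by
  have h1 : 0 ≤ a * y - r := by linarith
  have h2 : 0 ≤ y / a + r := by
    have h := le_inv_self ha ha1
    have : a * y ≤ y / a := by rw [div_eq_mul_inv]; nlinarith
    linarith
  have hnum : 0 ≤ y ^ 2 - r ^ 2 - (a⁻¹ - a) * y * r := by
    rw [hker_factor ha.ne']; positivity
  exact div_nonneg hnum (by positivity)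

lemma hker_le_two_div_sq {a y r : ℝ} (ha : 0 < a) (ha1 : a ≤ 1) (hy : 0 < y)
    (hr : |r| ≤ a * y) : hker a y r ≤ 2 / y ^ 2 := by
  have hA : 0 ≤ a⁻¹ - a := by
    linarith [le_inv_self ha ha1]
  have hAa : (a⁻¹ - a) * a = 1 - a ^ 2 := by field_simp
  have habs := abs_le.1 hr
  have hnum : y ^ 2 - r ^ 2 - (a⁻¹ - a) * y * r ≤ 2 * y ^ 2 := by
    have h1 : -((a⁻¹ - a) * y * r) ≤ (a⁻¹ - a) * y * (a * y) := by
      have := mul_le_mul_of_nonneg_left (neg_le_of_neg_le habs.1) (mul_nonneg hA hy.le)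
      calc -((a⁻¹ - a) * y * r) = (a⁻¹ - a) * y * (-r) := by ring
        _ ≤ (a⁻¹ - a) * y * (a * y) := by nlinarith [mul_nonneg hA hy.le]
    nlinarith [sq_nonneg r, sq_nonneg a, sq_nonneg (a*y)]
  have hden : y ^ 2 * y ^ 2 ≤ (y ^ 2 + r ^ 2) ^ 2 := by nlinarith [sq_nonneg r, sq_nonneg y]
  have h2y : (0:ℝ) < y ^ 2 := by positivity
  calc hker a y r = (y ^ 2 - r ^ 2 - (a⁻¹ - a) * y * r) / (y ^ 2 + r ^ 2) ^ 2 := rfl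
    _ ≤ 2 * y ^ 2 / (y ^ 2 * y ^ 2) :=
        div_le_div₀ (by positivity) hnum (by positivity) hden
    _ = 2 / y ^ 2 := by field_simp
lemma hker_abs_le {a y r : ℝ} (ha : 0 < a) (ha1 : a ≤ 1) (hr : 1 ≤ r) :
    |hker a y r| ≤ (1 + (a⁻¹ - a) / 2) * (1 + y ^ 2)⁻¹ := by
  have hA : 0 ≤ a⁻¹ - a := by linarith [le_inv_self ha ha1]
  set A := a⁻¹ - a with hAdef
  have hQ : (0:ℝ) < y ^ 2 + r ^ 2 := by nlinarith [sq_nonneg y]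
  have hyr : y * r ≤ (y ^ 2 + r ^ 2) / 2 := by nlinarith [sq_nonneg (y - r)]
  have hyr' : -((y ^ 2 + r ^ 2) / 2) ≤ y * r := by nlinarith [sq_nonneg (y + r)]
  have hnum : |y ^ 2 - r ^ 2 - A * y * r| ≤ (1 + A / 2) * (y ^ 2 + r ^ 2) := by
    rw [abs_le]
    constructor <;> nlinarith [sq_nonneg y, sq_nonneg r, mul_nonneg hA (sub_nonneg.2 hyr),
      mul_nonneg hA (sub_nonneg.2 (neg_le.1 hyr'))]
  have h1y : (0:ℝ) < 1 + y ^ 2 := by positivity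
  have hQ2 : (1 + y ^ 2) * (y ^ 2 + r ^ 2) ≤ ((y ^ 2 + r ^ 2) ^ 2) := by
    nlinarith [sq_nonneg y, sq_nonneg (r - 1)]
  calc |hker a y r| = |y ^ 2 - r ^ 2 - A * y * r| / (y ^ 2 + r ^ 2) ^ 2 := by
        rw [hker, abs_div]
        congr 1
        exact abs_of_nonneg (by positivity)
    _ ≤ ((1 + A / 2) * (y ^ 2 + r ^ 2)) / ((1 + y ^ 2) * (y ^ 2 + r ^ 2)) :=
        div_le_div₀ (by positivity) hnum (by positivity) hQ2
    _ = (1 + A / 2) * (1 + y ^ 2)⁻¹ := by field_simp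

lemma hker_hasDerivAt {a y : ℝ} (hy : 0 < y) (r : ℝ) :
    HasDerivAt (fun r => hker a y r) (Dker a y r) r := by
  have hQ : (0:ℝ) < y ^ 2 + r ^ 2 := by positivity
  have hN : HasDerivAt (fun r : ℝ => y ^ 2 - r ^ 2 - (a⁻¹ - a) * y * r)
      (-(2 * r) - (a⁻¹ - a) * y) r := by
    have h1 : HasDerivAt (fun r : ℝ => r ^ 2) (2 * r) r := by
      simpa using hasDerivAt_pow 2 r
    have h2 : HasDerivAt (fun r : ℝ => (a⁻¹ - a) * y * r) ((a⁻¹ - a) * y) r := by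
      simpa using (hasDerivAt_id r).const_mul ((a⁻¹ - a) * y)
    exact (((hasDerivAt_const r (y ^ 2)).sub h1).sub h2).congr_deriv (by ring)
  have hQd : HasDerivAt (fun r : ℝ => (y ^ 2 + r ^ 2) ^ 2)
      (2 * (y ^ 2 + r ^ 2) ^ 1 * (2 * r)) r := by
    have h1 : HasDerivAt (fun r : ℝ => y ^ 2 + r ^ 2) (2 * r) r := by
      simpa using hasDerivAt_pow 2 r
    exact h1.pow 2
  have := hN.div hQd (by positivity)
  refine this.congr_deriv ?_
  unfold Dker
  field_simp
  ring

lemma gfun_eq_Dker {a p r : ℝ} (hp : 0 < p) : gfun a (r / p) = p ^ 3 * Dker a p r := by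
  rw [gfun, Dker]
  have h1 : (0:ℝ) < p ^ 2 + r ^ 2 := by positivity
  have h2 : (0:ℝ) < 1 + (r / p) ^ 2 := by positivity
  field_simp

lemma Dker_continuousAt {a p r₀ : ℝ} (hp : 0 < p) :
    ContinuousAt (fun q : ℝ × ℝ => Dker a q.1 q.2) (p, r₀) := by
  apply ContinuousAt.div
  · fun_prop
  · fun_prop
  · have : (0:ℝ) < p ^ 2 + r₀ ^ 2 := by positivity
    positivity
/-- Mean value bound for `hker` in the second variable. -/
lemma hker_mvt {a y c C r₁ r₂ : ℝ} (hy : 0 < y)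
    (hb : ∀ r ∈ uIcc r₁ r₂, |Dker a y r - c| ≤ C) :
    |hker a y r₂ - hker a y r₁ - c * (r₂ - r₁)| ≤ C * |r₂ - r₁| := by
  have hconv : Convex ℝ (uIcc r₁ r₂) := convex_uIcc _ _
  have hd : ∀ r ∈ uIcc r₁ r₂,
      HasDerivWithinAt (fun r => hker a y r - c * r) (Dker a y r - c) (uIcc r₁ r₂) r := by
    intro r _
    exact ((hker_hasDerivAt hy r).sub (by simpa using (hasDerivAt_id r).const_mul c)).hasDerivWithinAt
  have := hconv.norm_image_sub_le_of_norm_hasDerivWithin_le hd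
    (fun r hr => by simpa using hb r hr) (left_mem_uIcc) (right_mem_uIcc)
  rw [Real.norm_eq_abs, Real.norm_eq_abs] at this
  have h2 : hker a y r₂ - c * r₂ - (hker a y r₁ - c * r₁)
      = hker a y r₂ - hker a y r₁ - c * (r₂ - r₁) := by ring
  rw [h2] at this
  exact this

lemma memFplus.nonneg {a : ℝ} {f : ℝ → ℝ} (hf : memFplus a f) : ∀ x, 0 ≤ x → 0 ≤ f x := hf.1
lemma memFplus.lip {a : ℝ} {f : ℝ → ℝ} (hf : memFplus a f) :
    ∀ x y : ℝ, 0 ≤ x → 0 ≤ y → |f x - f y| ≤ a * |x - y| := hf.2.1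
lemma memFplus.one {a : ℝ} {f : ℝ → ℝ} (hf : memFplus a f) : f 0 = 1 := hf.2.2.1

lemma memFplus.dist_one {a : ℝ} {f : ℝ → ℝ} (hf : memFplus a f) {y : ℝ} (hy : 0 ≤ y) :
    |f y - 1| ≤ a * y := by
  have := hf.lip y 0 hy le_rfl
  rwa [hf.one, sub_zero, abs_of_nonneg hy] at this

lemma memFplus.continuousOn {a : ℝ} {f : ℝ → ℝ} (hf : memFplus a f) :
    ContinuousOn f (Ici 0) := by
  intro x hx
  apply Metric.continuousWithinAt_iff.2
  intro ε hε
  rcases le_or_gt a 0 with h | h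
  · exact ⟨1, one_pos, fun y hy _ => by
      have := hf.lip y x hy hx
      have : |f y - f x| ≤ 0 := this.trans (by nlinarith [abs_nonneg (y - x)])
      simpa [Real.dist_eq] using lt_of_le_of_lt this hε⟩
  · refine ⟨ε / a, by positivity, fun y hy hdy => ?_⟩
    have := hf.lip y x hy hx
    rw [Real.dist_eq] at *
    calc |f y - f x| ≤ a * |y - x| := this
      _ < a * (ε / a) := by exact mul_lt_mul_of_pos_left hdy h
      _ = ε := by field_simp

/-- Continuity of `y ↦ hker a y (ψ y)` away from `0`. -/
lemma hker_continuousOn {a : ℝ} {ψ : ℝ → ℝ} {s : Set ℝ} (hψ : ContinuousOn ψ s)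
    (hs : ∀ y ∈ s, 0 < y) : ContinuousOn (fun y => hker a y (ψ y)) s := by
  apply ContinuousOn.div
  · fun_prop
  · fun_prop
  · intro y hy
    have := hs y hy
    positivity

lemma Dker_comp_continuousOn {a : ℝ} {ψ : ℝ → ℝ} {s : Set ℝ} (hψ : ContinuousOn ψ s)
    (hs : ∀ y ∈ s, 0 < y) : ContinuousOn (fun y => Dker a y (ψ y)) s := by
  apply ContinuousOn.div
  · fun_prop
  · fun_prop
  · intro y hy
    have h1 := hs y hy
    have : (0:ℝ) < y ^ 2 + ψ y ^ 2 := by positivity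
    positivity
lemma memFplus.abs_one_sub_le {a : ℝ} {f : ℝ → ℝ} (hf : memFplus a f) {y : ℝ} (hy : 0 ≤ y) :
    |1 - f y| ≤ a * y := by
  rw [abs_sub_comm]; exact hf.dist_one hy

lemma hker_minus_nonneg {a : ℝ} {f : ℝ → ℝ} (ha : 0 < a) (ha1 : a ≤ 1)
    (hf : memFplus a f) {y : ℝ} (hy : 0 < y) : 0 ≤ hker a y (1 - f y) := by
  have h := abs_le.1 (hf.abs_one_sub_le hy.le)
  exact hker_nonneg ha ha1 hy h.2 h.1

lemma hker_minus_le {a : ℝ} {f : ℝ → ℝ} (ha : 0 < a) (ha1 : a ≤ 1)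
    (hf : memFplus a f) {y : ℝ} (hy : 0 < y) : hker a y (1 - f y) ≤ 2 / y ^ 2 :=
  hker_le_two_div_sq ha ha1 hy (hf.abs_one_sub_le hy.le)

lemma contOn_one_add {a : ℝ} {f : ℝ → ℝ} (hf : memFplus a f) :
    ContinuousOn (fun y => 1 + f y) (Ici (0:ℝ)) := continuousOn_const.add hf.continuousOn

lemma contOn_one_sub {a : ℝ} {f : ℝ → ℝ} (hf : memFplus a f) :
    ContinuousOn (fun y => 1 - f y) (Ici (0:ℝ)) := continuousOn_const.sub hf.continuousOn

lemma hker_plus_aesm {a : ℝ} {f : ℝ → ℝ} (hf : memFplus a f) :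
    AEStronglyMeasurable (fun y => hker a y (1 + f y)) (volume.restrict (Ioi (0:ℝ))) :=
  ((hker_continuousOn ((contOn_one_add hf).mono Ioi_subset_Ici_self)
    (fun y hy => hy)).aestronglyMeasurable measurableSet_Ioi)

lemma hker_minus_aesm {a : ℝ} {f : ℝ → ℝ} (hf : memFplus a f) :
    AEStronglyMeasurable (fun y => hker a y (1 - f y)) (volume.restrict (Ioi (0:ℝ))) :=
  ((hker_continuousOn ((contOn_one_sub hf).mono Ioi_subset_Ici_self)
    (fun y hy => hy)).aestronglyMeasurable measurableSet_Ioi)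

lemma hker_plus_integrable {a : ℝ} {f : ℝ → ℝ} (ha : 0 < a) (ha1 : a ≤ 1)
    (hf : memFplus a f) :
    IntegrableOn (fun y => hker a y (1 + f y)) (Ioi (0:ℝ)) := by
  have hint : Integrable (fun y : ℝ => (1 + (a⁻¹ - a) / 2) * (1 + y ^ 2)⁻¹)
      (volume.restrict (Ioi (0:ℝ))) :=
    ((integrable_inv_one_add_sq).const_mul _).restrict
  refine hint.mono' (hker_plus_aesm hf) ?_
  rw [ae_restrict_iff' measurableSet_Ioi]
  refine Eventually.of_forall (fun y hy => ?_)
  rw [Real.norm_eq_abs]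
  have h1 : 1 ≤ 1 + f y := by linarith [hf.nonneg y (le_of_lt hy)]
  exact hker_abs_le ha ha1 h1

lemma hker_minus_finite_on_Icc {a : ℝ} {f : ℝ → ℝ} (ha : 0 < a) (ha1 : a ≤ 1)
    (hf : memFplus a f) {u v : ℝ} (hu : 0 < u) :
    (∫⁻ y in Icc u v, ENNReal.ofReal (hker a y (1 - f y))) < ⊤ := by
  have hb : ∀ y ∈ Icc u v, ENNReal.ofReal (hker a y (1 - f y))
      ≤ ENNReal.ofReal (2 / u ^ 2) := by
    intro y hy
    have hy0 : 0 < y := lt_of_lt_of_le hu hy.1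
    apply ENNReal.ofReal_le_ofReal
    refine (hker_minus_le ha ha1 hf hy0).trans ?_
    gcongr
    exact hy.1
  calc (∫⁻ y in Icc u v, ENNReal.ofReal (hker a y (1 - f y)))
      ≤ ∫⁻ _ in Icc u v, ENNReal.ofReal (2 / u ^ 2) :=
        setLIntegral_mono' measurableSet_Icc hb
    _ = ENNReal.ofReal (2 / u ^ 2) * volume (Icc u v) := by
        rw [setLIntegral_const]
    _ < ⊤ := by
        apply ENNReal.mul_lt_top ENNReal.ofReal_lt_top
        rw [Real.volume_Icc]
        exact ENNReal.ofReal_lt_top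
noncomputable def tentf (a x : ℝ) : ℝ := max (1 - a * x) 0

lemma tentf_mem {a : ℝ} (ha : 0 < a) (ha1 : a ≤ 1) : memFplus a (tentf a) := by
  refine ⟨fun x _ => le_max_right _ _, fun x y _ _ => ?_, by simp [tentf], ?_⟩
  · refine (abs_max_sub_max_le_max _ _ _ _).trans ?_
    have h1 : |1 - a * x - (1 - a * y)| = a * |x - y| := by
      rw [show 1 - a * x - (1 - a * y) = a * (y - x) by ring, abs_mul, abs_of_pos ha,
        abs_sub_comm]
    have h0 : |(0:ℝ) - 0| = 0 := by simp
    rw [h1, h0]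
    exact max_le le_rfl (by positivity)
  · have hlin : HasDerivWithinAt (fun x : ℝ => 1 - a * x) (-a) (Ici 0) 0 := by
      have : HasDerivAt (fun x : ℝ => 1 - a * x) (-a) 0 := by
        exact ((hasDerivAt_const (0:ℝ) (1:ℝ)).sub ((hasDerivAt_id (0:ℝ)).const_mul a)).congr_deriv (by ring)
      exact this.hasDerivWithinAt
    refine hlin.congr_of_eventuallyEq ?_ (by simp [tentf])
    filter_upwards [mem_nhdsWithin_of_mem_nhds (Iio_mem_nhds (by positivity : (0:ℝ) < a⁻¹)),
      self_mem_nhdsWithin] with x hx1 hx2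
    have h2 : a * x < a * a⁻¹ := mul_lt_mul_of_pos_left hx1 ha
    rw [mul_inv_cancel₀ ha.ne'] at h2
    exact max_eq_left (by linarith)

lemma tentf_lint_lt_top {a : ℝ} (ha : 0 < a) (ha1 : a ≤ 1) :
    (∫⁻ y in Ioi (0:ℝ), ENNReal.ofReal (hker a y (1 - tentf a y))) < ⊤ := by
  have hsplit : Ioi (0:ℝ) = Ioc 0 a⁻¹ ∪ Ioi a⁻¹ :=
    (Ioc_union_Ioi_eq_Ioi (by positivity)).symm
  rw [hsplit, lintegral_union measurableSet_Ioi Ioc_disjoint_Ioi_same]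
  have h1 : (∫⁻ y in Ioc (0:ℝ) a⁻¹, ENNReal.ofReal (hker a y (1 - tentf a y))) = 0 := by
    rw [setLIntegral_congr_fun measurableSet_Ioc
      (fun y hy => ?_), lintegral_zero]
    have hy1 : a * y ≤ 1 := by
      have := mul_le_mul_of_nonneg_left hy.2 ha.le
      rwa [mul_inv_cancel₀ ha.ne'] at this
    have htent : tentf a y = 1 - a * y := max_eq_left (by linarith)
    have hnum : y ^ 2 - (a * y) ^ 2 - (a⁻¹ - a) * y * (a * y) = 0 := by
      field_simp; ring
    rw [htent, show (1 : ℝ) - (1 - a * y) = a * y by ring, hker, hnum, zero_div,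
      ENNReal.ofReal_zero]
  rw [h1, zero_add]
  have hia : (0:ℝ) < a⁻¹ := by positivity
  have hint : IntegrableOn (fun y : ℝ => 2 / y ^ 2) (Ioi a⁻¹) := by
    have h0 : IntegrableOn (fun y : ℝ => y ^ (-2 : ℝ)) (Ioi a⁻¹) :=
      integrableOn_Ioi_rpow_of_lt (by norm_num) hia
    refine IntegrableOn.congr_fun (h0.const_mul 2) (fun y hy => ?_) measurableSet_Ioi
    have hy0 : 0 < y := lt_trans hia hy
    have : y ^ (-2 : ℝ) = (y ^ 2)⁻¹ := by
      rw [show (-2:ℝ) = -(2:ℝ) by norm_num, Real.rpow_neg hy0.le, Real.rpow_two]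
    simp only [this]
    rw [div_eq_mul_inv]
  have hnn : 0 ≤ᵐ[volume.restrict (Ioi a⁻¹)] fun y : ℝ => 2 / y ^ 2 := by
    have := (ae_restrict_iff' (μ := volume) (s := Ioi a⁻¹) (p := fun y : ℝ => (0:ℝ) ≤ 2 / y ^ 2)
      measurableSet_Ioi).2 (Eventually.of_forall fun y hy => by positivity)
    exact this
  have hfin := (hasFiniteIntegral_iff_ofReal hnn).1 hint.2
  refine lt_of_le_of_lt (setLIntegral_mono' measurableSet_Ioi (fun y hy => ?_)) hfin
  have hy0 : 0 < y := lt_trans hia hy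
  have htent : tentf a y = 0 := by
    apply max_eq_right
    have : 1 ≤ a * y := by
      have := mul_le_mul_of_nonneg_left (le_of_lt hy) ha.le
      rwa [mul_inv_cancel₀ ha.ne'] at this
    linarith
  apply ENNReal.ofReal_le_ofReal
  rw [htent, sub_zero]
  refine hker_le_two_div_sq ha ha1 hy0 ?_
  rw [abs_one]
  have := mul_le_mul_of_nonneg_left (le_of_lt hy) ha.le
  rwa [mul_inv_cancel₀ ha.ne'] at this
lemma EReal_coe_toReal {l : ℝ≥0∞} (hl : l ≠ ⊤) : (l : EReal) = ((l.toReal : ℝ) : EReal) := by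
  conv_lhs => rw [← ENNReal.ofReal_toReal hl]
  rw [EReal.coe_ennreal_ofReal]
  exact max_eq_left (EReal.coe_nonneg.2 ENNReal.toReal_nonneg)

lemma Hplus_eq {a : ℝ} (f : ℝ → ℝ)
    (hl : (∫⁻ y in Ioi (0:ℝ), ENNReal.ofReal (hker a y (1 - f y))) ≠ ⊤) :
    Hplus a f = (((∫ y in Ioi (0:ℝ), hker a y (1 + f y)) +
      (∫⁻ y in Ioi (0:ℝ), ENNReal.ofReal (hker a y (1 - f y))).toReal : ℝ) : EReal) := by
  rw [Hplus, EReal_coe_toReal hl, ← EReal.coe_add]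

lemma hker_minus_nonneg_ae {a : ℝ} {f : ℝ → ℝ} (ha : 0 < a) (ha1 : a ≤ 1)
    (hf : memFplus a f) :
    0 ≤ᵐ[volume.restrict (Ioi (0:ℝ))] fun y => hker a y (1 - f y) := by
  have := (ae_restrict_iff' (μ := volume) (s := Ioi (0:ℝ))
    (p := fun y : ℝ => (0:ℝ) ≤ hker a y (1 - f y)) measurableSet_Ioi).2
    (Eventually.of_forall fun y hy => hker_minus_nonneg ha ha1 hf hy)
  exact this

lemma toReal_lint_eq {a : ℝ} {f : ℝ → ℝ} (ha : 0 < a) (ha1 : a ≤ 1) (hf : memFplus a f) :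
    (∫⁻ y in Ioi (0:ℝ), ENNReal.ofReal (hker a y (1 - f y))).toReal
      = ∫ y in Ioi (0:ℝ), hker a y (1 - f y) :=
  (integral_eq_lintegral_of_nonneg_ae (hker_minus_nonneg_ae ha ha1 hf)
    (hker_minus_aesm hf)).symm

lemma lint_ne_top_of_min {a : ℝ} {f : ℝ → ℝ} (ha : 0 < a) (ha1 : a ≤ 1)
    (hf : memFplus a f)
    (hmin : ∀ φ : ℝ → ℝ, memFplus a φ → Hplus a f ≤ Hplus a φ) :
    (∫⁻ y in Ioi (0:ℝ), ENNReal.ofReal (hker a y (1 - f y))) ≠ ⊤ := by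
  intro htop
  have h1 := hmin (tentf a) (tentf_mem ha ha1)
  rw [Hplus_eq (tentf a) (tentf_lint_lt_top ha ha1).ne] at h1
  rw [Hplus, htop] at h1
  rw [EReal.coe_ennreal_top, EReal.coe_add_top] at h1
  exact EReal.coe_ne_top _ (top_le_iff.1 h1)

lemma hker_minus_integrable {a : ℝ} {f : ℝ → ℝ} (ha : 0 < a) (ha1 : a ≤ 1)
    (hf : memFplus a f)
    (hl : (∫⁻ y in Ioi (0:ℝ), ENNReal.ofReal (hker a y (1 - f y))) ≠ ⊤) :
    IntegrableOn (fun y => hker a y (1 - f y)) (Ioi (0:ℝ)) :=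
  ⟨hker_minus_aesm hf,
    (hasFiniteIntegral_iff_ofReal (hker_minus_nonneg_ae ha ha1 hf)).2 (lt_top_iff_ne_top.2 hl)⟩

lemma lint_ne_top_congr {a : ℝ} {f φ : ℝ → ℝ} {u v : ℝ} (ha : 0 < a) (ha1 : a ≤ 1)
    (hφ : memFplus a φ) (hu : 0 < u)
    (hoff : ∀ x, x ∉ Icc u v → φ x = f x)
    (hl : (∫⁻ y in Ioi (0:ℝ), ENNReal.ofReal (hker a y (1 - f y))) ≠ ⊤) :
    (∫⁻ y in Ioi (0:ℝ), ENNReal.ofReal (hker a y (1 - φ y))) ≠ ⊤ := by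
  have hunion : (Ioi (0:ℝ) \ Icc u v) ∪ (Ioi (0:ℝ) ∩ Icc u v) = Ioi (0:ℝ) :=
    diff_union_inter _ _
  rw [← hunion, lintegral_union (measurableSet_Ioi.inter measurableSet_Icc)
    disjoint_sdiff_inter]
  have h1 : (∫⁻ y in Ioi (0:ℝ) \ Icc u v, ENNReal.ofReal (hker a y (1 - φ y))) ≠ ⊤ := by
    have heq : ∀ᵐ y ∂(volume.restrict (Ioi (0:ℝ) \ Icc u v)),
        ENNReal.ofReal (hker a y (1 - φ y)) = ENNReal.ofReal (hker a y (1 - f y)) := by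
      have := (ae_restrict_iff' (μ := volume) (s := Ioi (0:ℝ) \ Icc u v)
        (p := fun y : ℝ => ENNReal.ofReal (hker a y (1 - φ y))
          = ENNReal.ofReal (hker a y (1 - f y)))
        (measurableSet_Ioi.diff measurableSet_Icc)).2
        (Eventually.of_forall fun y hy => by rw [hoff y hy.2])
      exact this
    rw [lintegral_congr_ae heq]
    exact ((lintegral_mono_set diff_subset).trans_lt (lt_top_iff_ne_top.2 hl)).ne
  have h2 : (∫⁻ y in Ioi (0:ℝ) ∩ Icc u v, ENNReal.ofReal (hker a y (1 - φ y))) ≠ ⊤ :=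
    ((lintegral_mono_set inter_subset_right).trans_lt
      (hker_minus_finite_on_Icc ha ha1 hφ hu)).ne
  exact ENNReal.add_ne_top.2 ⟨h1, h2⟩

/-- The minimality property, in purely real terms, against competitors agreeing with `f`
off a compact subinterval. -/
lemma hmin_real {a : ℝ} {f φ : ℝ → ℝ} {u v : ℝ} (ha : 0 < a) (ha1 : a ≤ 1)
    (hf : memFplus a f) (hφ : memFplus a φ)
    (hmin : ∀ ψ : ℝ → ℝ, memFplus a ψ → Hplus a f ≤ Hplus a ψ)
    (hu : 0 < u) (hoff : ∀ x, x ∉ Icc u v → φ x = f x) :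
    (∫ y in Ioi (0:ℝ), hker a y (1 + f y)) + (∫ y in Ioi (0:ℝ), hker a y (1 - f y))
      ≤ (∫ y in Ioi (0:ℝ), hker a y (1 + φ y)) + (∫ y in Ioi (0:ℝ), hker a y (1 - φ y)) := by
  have hlf := lint_ne_top_of_min ha ha1 hf hmin
  have hlφ := lint_ne_top_congr ha ha1 hφ hu hoff hlf
  have h1 := hmin φ hφ
  rw [Hplus_eq f hlf, Hplus_eq φ hlφ, EReal.coe_le_coe_iff,
    toReal_lint_eq ha ha1 hf, toReal_lint_eq ha ha1 hφ] at h1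
  exact h1
lemma integral_diff_split {F G : ℝ → ℝ} {u v : ℝ} (hu : 0 < u)
    (hF : IntegrableOn F (Ioi 0)) (hG : IntegrableOn G (Ioi 0))
    (hoff : ∀ x, x ∉ Icc u v → F x = G x) :
    (∫ y in Ioi (0:ℝ), F y) - (∫ y in Ioi (0:ℝ), G y)
      = (∫ y in Icc u v, F y) - (∫ y in Icc u v, G y) := by
  have hsub : Icc u v ⊆ Ioi 0 := fun x hx => lt_of_lt_of_le hu hx.1
  have h1 := integral_diff measurableSet_Icc hF hsub
  have h2 := integral_diff measurableSet_Icc hG hsub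
  have h3 : ∫ y in Ioi (0:ℝ) \ Icc u v, F y = ∫ y in Ioi (0:ℝ) \ Icc u v, G y :=
    setIntegral_congr_fun (measurableSet_Ioi.diff measurableSet_Icc)
      (fun x hx => hoff x hx.2)
  linarith

lemma abs_sub_le_of_mem_uIcc {r r₁ r₂ : ℝ} (h : r ∈ uIcc r₁ r₂) : |r - r₁| ≤ |r₂ - r₁| := by
  rcases mem_uIcc.1 h with h | h
  · rw [abs_of_nonneg (by linarith [h.1]), abs_of_nonneg (by linarith [h.1, h.2])]
    linarith [h.2]
  · rw [abs_of_nonpos (by linarith [h.2]), abs_of_nonpos (by linarith [h.1, h.2])]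
    linarith [h.1]

/-- Core first-order estimate: the change of the `hker`-energy over a shrinking interval
around `p` under a small perturbation of size `Δ` is `(∫ Δ) · Dker a p (g p)` up to `ε ∫ Δ`. -/
lemma subcore {a p : ℝ} (ha : 0 < a) (hp : 0 < p) (g : ℝ → ℝ)
    (hg : ∀ y, 0 ≤ y → |g y - g p| ≤ a * |y - p|)
    (hgc : ContinuousOn g (Ici 0)) {ε : ℝ} (hε : 0 < ε) :
    ∃ δ : ℝ, 0 < δ ∧ δ < p / 2 ∧ ∀ s u v : ℝ, s = 1 ∨ s = -1 →
      p - δ ≤ u → u ≤ p → p ≤ v → v ≤ p + δ →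
      ∀ Δ : ℝ → ℝ, ContinuousOn Δ (Icc u v) →
      (∀ x ∈ Icc u v, 0 ≤ Δ x ∧ Δ x ≤ 2 * a * (v - u)) →
      |(∫ y in Icc u v, (hker a y (g y + s * Δ y) - hker a y (g y)))
          - s * (∫ y in Icc u v, Δ y) * Dker a p (g p)|
        ≤ ε * ∫ y in Icc u v, Δ y := by
  set c := Dker a p (g p) with hc
  obtain ⟨δ₁, hδ₁, hcont⟩ := Metric.continuousAt_iff.1 (Dker_continuousAt (a := a)
    (r₀ := g p) hp) ε hε
  refine ⟨min (p / 4) (δ₁ / (5 * a + 2)), by positivity, ?_, ?_⟩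
  · have : min (p / 4) (δ₁ / (5 * a + 2)) ≤ p / 4 := min_le_left _ _
    linarith
  set δ := min (p / 4) (δ₁ / (5 * a + 2)) with hδdef
  have hδp : δ ≤ p / 4 := min_le_left _ _
  have hδ1 : δ ≤ δ₁ / (5 * a + 2) := min_le_right _ _
  have hδpos : 0 < δ := by positivity
  intro s u v hs hu1 hu2 hv1 hv2 Δ hΔc hΔb
  have huv : u ≤ v := le_trans hu2 hv1
  have hupos : 0 < u := by linarith
  have hIccIci : Icc u v ⊆ Ici (0:ℝ) := fun x hx => le_trans hupos.le hx.1
  have habs_s : |s| = 1 := by rcases hs with h | h <;> simp [h]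
  -- pointwise estimate
  have hpt : ∀ y ∈ Icc u v,
      |hker a y (g y + s * Δ y) - hker a y (g y) - c * (s * Δ y)| ≤ ε * Δ y := by
    intro y hy
    have hy0 : 0 < y := lt_of_lt_of_le hupos hy.1
    have hΔy := hΔb y hy
    have hvu : v - u ≤ 2 * δ := by linarith
    have hΔub : Δ y ≤ 4 * a * δ := by nlinarith [hΔy.2]
    have hb : ∀ r ∈ uIcc (g y) (g y + s * Δ y), |Dker a y r - c| ≤ ε := by
      intro r hr
      have h1 : |r - g y| ≤ Δ y := by
        have := abs_sub_le_of_mem_uIcc hr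
        rwa [add_sub_cancel_left, abs_mul, habs_s, one_mul,
          abs_of_nonneg hΔy.1] at this
      have h2 : |g y - g p| ≤ a * δ := by
        refine (hg y (hIccIci hy)).trans ?_
        have : |y - p| ≤ δ := abs_le.2 ⟨by linarith [hy.1], by linarith [hy.2]⟩
        nlinarith
      have h3 : |r - g p| ≤ 5 * a * δ := by
        calc |r - g p| ≤ |r - g y| + |g y - g p| := abs_sub_le _ _ _
          _ ≤ 4 * a * δ + a * δ := add_le_add (h1.trans hΔub) h2
          _ = 5 * a * δ := by ring
      have hdist : dist (y, r) (p, g p) < δ₁ := by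
        rw [Prod.dist_eq]
        apply max_lt
        · rw [Real.dist_eq]
          have : |y - p| ≤ δ := abs_le.2 ⟨by linarith [hy.1], by linarith [hy.2]⟩
          calc |y - p| ≤ δ := this
            _ ≤ δ₁ / (5 * a + 2) := hδ1
            _ < δ₁ := by
              rw [div_lt_iff₀ (by positivity)]
              nlinarith
        · rw [Real.dist_eq]
          calc |r - g p| ≤ 5 * a * δ := h3
            _ ≤ 5 * a * (δ₁ / (5 * a + 2)) := by nlinarith
            _ < δ₁ := by
              rw [mul_div_assoc', div_lt_iff₀ (by positivity)]
              nlinarith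
      have := hcont hdist
      rw [Real.dist_eq] at this
      exact this.le
    have := hker_mvt (c := c) hy0 hb
    rw [add_sub_cancel_left, abs_mul, habs_s, one_mul, abs_of_nonneg hΔy.1] at this
    exact this
  -- integrability
  have hΔint : IntegrableOn Δ (Icc u v) := hΔc.integrableOn_compact isCompact_Icc
  have hcont1 : ContinuousOn (fun y => hker a y (g y + s * Δ y)) (Icc u v) := by
    refine hker_continuousOn ((hgc.mono hIccIci).add (hΔc.const_smul s)) ?_
    exact fun y hy => lt_of_lt_of_le hupos hy.1
  have hcont2 : ContinuousOn (fun y => hker a y (g y)) (Icc u v) :=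
    hker_continuousOn (hgc.mono hIccIci) (fun y hy => lt_of_lt_of_le hupos hy.1)
  have hint1 : IntegrableOn (fun y => hker a y (g y + s * Δ y)) (Icc u v) :=
    hcont1.integrableOn_compact isCompact_Icc
  have hint2 : IntegrableOn (fun y => hker a y (g y)) (Icc u v) :=
    hcont2.integrableOn_compact isCompact_Icc
  have hFi : IntegrableOn
      (fun y => hker a y (g y + s * Δ y) - hker a y (g y) - c * (s * Δ y)) (Icc u v) :=
    (hint1.sub hint2).sub ((hΔint.const_mul s).const_mul c)
  have hint_eq : (∫ y in Icc u v, (hker a y (g y + s * Δ y) - hker a y (g y)))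
      - s * (∫ y in Icc u v, Δ y) * c
      = ∫ y in Icc u v,
        (hker a y (g y + s * Δ y) - hker a y (g y) - c * (s * Δ y)) := by
    have e1 : (∫ y in Icc u v,
        (hker a y (g y + s * Δ y) - hker a y (g y) - c * (s * Δ y)))
        = (∫ y in Icc u v, (hker a y (g y + s * Δ y) - hker a y (g y)))
          - ∫ y in Icc u v, c * (s * Δ y) :=
      integral_sub (hint1.sub hint2) ((hΔint.const_mul s).const_mul c)
    have e2 : (∫ y in Icc u v, c * (s * Δ y))
        = c * (s * ∫ y in Icc u v, Δ y) := by
      rw [integral_const_mul, integral_const_mul]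
    rw [e1, e2]
    ring
  rw [hint_eq]
  calc |∫ y in Icc u v,
        (hker a y (g y + s * Δ y) - hker a y (g y) - c * (s * Δ y))|
      ≤ ∫ y in Icc u v,
        |hker a y (g y + s * Δ y) - hker a y (g y) - c * (s * Δ y)| := by
        simpa [Real.norm_eq_abs] using
          norm_integral_le_integral_norm (μ := volume.restrict (Icc u v))
            (fun y => hker a y (g y + s * Δ y) - hker a y (g y) - c * (s * Δ y))
    _ ≤ ∫ y in Icc u v, ε * Δ y := by
        refine setIntegral_mono_on hFi.abs (hΔint.const_mul ε) measurableSet_Icc ?_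
        exact fun y hy => hpt y hy
    _ = ε * ∫ y in Icc u v, Δ y := integral_const_mul _ _
/-- The key variational step: if a competitor `φ ∈ F⁺` deviating from `f` only on a small
interval around `p` (one-sidedly, with the sign `σ`) exists with positive area, then the
corresponding first-variation inequality holds up to `2ε`. -/
lemma step {a : ℝ} {f : ℝ → ℝ} (ha : 0 < a) (ha1 : a ≤ 1) (hf : memFplus a f)
    (hmin : ∀ ψ : ℝ → ℝ, memFplus a ψ → Hplus a f ≤ Hplus a ψ)
    {p : ℝ} (hp : 0 < p) {ε : ℝ} (hε : 0 < ε) :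
    ∃ δ : ℝ, 0 < δ ∧ δ < p / 2 ∧ ∀ σ u v : ℝ, ∀ φ : ℝ → ℝ, σ = 1 ∨ σ = -1 →
      p - δ ≤ u → u ≤ p → p ≤ v → v ≤ p + δ →
      memFplus a φ → (∀ x, x ∉ Icc u v → φ x = f x) →
      (∀ x ∈ Icc u v, 0 ≤ σ * (φ x - f x) ∧ σ * (φ x - f x) ≤ 2 * a * (v - u)) →
      0 < (∫ y in Icc u v, σ * (φ y - f y)) →
      -(2 * ε) ≤ σ * (Dker a p (1 + f p) - Dker a p (1 - f p)) := by
  have hgP : ∀ y, 0 ≤ y → |(1 + f y) - (1 + f p)| ≤ a * |y - p| := by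
    intro y hy
    have := hf.lip y p hy hp.le
    simpa using this
  have hgM : ∀ y, 0 ≤ y → |(1 - f y) - (1 - f p)| ≤ a * |y - p| := by
    intro y hy
    have := hf.lip y p hy hp.le
    rw [show (1 - f y) - (1 - f p) = -(f y - f p) by ring, abs_neg]
    exact this
  obtain ⟨δP, hδPpos, hδPhalf, HP⟩ := subcore ha hp (fun y => 1 + f y) hgP
    (contOn_one_add hf) hε
  obtain ⟨δM, hδMpos, hδMhalf, HM⟩ := subcore ha hp (fun y => 1 - f y) hgM
    (contOn_one_sub hf) hε
  refine ⟨min δP δM, lt_min hδPpos hδMpos, lt_of_le_of_lt (min_le_left _ _) hδPhalf, ?_⟩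
  intro σ u v φ hσ hu1 hu2 hv1 hv2 hφ hoff hb hIpos
  set δ := min δP δM with hδdef
  have hδ : δ < p / 2 := lt_of_le_of_lt (min_le_left _ _) hδPhalf
  have hupos : 0 < u := by linarith
  set Δ : ℝ → ℝ := fun y => σ * (φ y - f y) with hΔdef
  have hσ2 : σ * σ = 1 := by rcases hσ with rfl | rfl <;> norm_num
  have hIccIci : Icc u v ⊆ Ici (0:ℝ) := fun x hx => le_trans hupos.le hx.1
  have hΔc : ContinuousOn Δ (Icc u v) :=
    ((hφ.continuousOn.mono hIccIci).sub (hf.continuousOn.mono hIccIci)).const_smul σ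
  have hplus_eq : ∀ y, (1 + f y) + σ * Δ y = 1 + φ y := by
    intro y
    simp only [hΔdef]
    linear_combination (φ y - f y) * hσ2
  have hminus_eq : ∀ y, (1 - f y) + (-σ) * Δ y = 1 - φ y := by
    intro y
    simp only [hΔdef]
    linear_combination (-(φ y - f y)) * hσ2
  -- apply subcore to both parts
  have AP := HP σ u v hσ (le_trans (by linarith [min_le_left δP δM]) hu1) hu2 hv1
    (le_trans hv2 (by linarith [min_le_left δP δM])) Δ hΔc hb
  have hσneg : -σ = 1 ∨ -σ = -1 := by rcases hσ with rfl | rfl <;> norm_num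
  have AM := HM (-σ) u v hσneg (le_trans (by linarith [min_le_right δP δM]) hu1) hu2 hv1
    (le_trans hv2 (by linarith [min_le_right δP δM])) Δ hΔc hb
  -- rewrite the integrands
  have eP : (∫ y in Icc u v, (hker a y ((1 + f y) + σ * Δ y) - hker a y (1 + f y)))
      = ∫ y in Icc u v, (hker a y (1 + φ y) - hker a y (1 + f y)) :=
    setIntegral_congr_fun measurableSet_Icc (fun y _ => by rw [hplus_eq y])
  have eM : (∫ y in Icc u v, (hker a y ((1 - f y) + (-σ) * Δ y) - hker a y (1 - f y)))
      = ∫ y in Icc u v, (hker a y (1 - φ y) - hker a y (1 - f y)) :=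
    setIntegral_congr_fun measurableSet_Icc (fun y _ => by rw [hminus_eq y])
  rw [eP] at AP
  rw [eM] at AM
  -- the minimality inequality in real terms
  have hreal := hmin_real ha ha1 hf hφ hmin hupos hoff
  have hlf := lint_ne_top_of_min ha ha1 hf hmin
  have hlφ := lint_ne_top_congr ha ha1 hφ hupos hoff hlf
  have hsplitP : (∫ y in Ioi (0:ℝ), hker a y (1 + φ y))
      - (∫ y in Ioi (0:ℝ), hker a y (1 + f y))
      = (∫ y in Icc u v, hker a y (1 + φ y)) - ∫ y in Icc u v, hker a y (1 + f y) :=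
    integral_diff_split hupos (hker_plus_integrable ha ha1 hφ)
      (hker_plus_integrable ha ha1 hf) (fun x hx => by rw [hoff x hx])
  have hsplitM : (∫ y in Ioi (0:ℝ), hker a y (1 - φ y))
      - (∫ y in Ioi (0:ℝ), hker a y (1 - f y))
      = (∫ y in Icc u v, hker a y (1 - φ y)) - ∫ y in Icc u v, hker a y (1 - f y) :=
    integral_diff_split hupos (hker_minus_integrable ha ha1 hφ hlφ)
      (hker_minus_integrable ha ha1 hf hlf) (fun x hx => by rw [hoff x hx])
  -- combine
  have hIccP : (∫ y in Icc u v, (hker a y (1 + φ y) - hker a y (1 + f y)))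
      = (∫ y in Icc u v, hker a y (1 + φ y)) - ∫ y in Icc u v, hker a y (1 + f y) :=
    integral_sub ((hker_plus_integrable ha ha1 hφ).mono_set
        (fun x hx => lt_of_lt_of_le hupos hx.1))
      ((hker_plus_integrable ha ha1 hf).mono_set (fun x hx => lt_of_lt_of_le hupos hx.1))
  have hIccM : (∫ y in Icc u v, (hker a y (1 - φ y) - hker a y (1 - f y)))
      = (∫ y in Icc u v, hker a y (1 - φ y)) - ∫ y in Icc u v, hker a y (1 - f y) :=
    integral_sub ((hker_minus_integrable ha ha1 hφ hlφ).mono_set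
        (fun x hx => lt_of_lt_of_le hupos hx.1))
      ((hker_minus_integrable ha ha1 hf hlf).mono_set
        (fun x hx => lt_of_lt_of_le hupos hx.1))
  have hAP := abs_le.1 AP
  have hAM := abs_le.1 AM
  have key : 0 ≤ (∫ y in Icc u v, Δ y) * (σ * (Dker a p (1 + f p) - Dker a p (1 - f p))
      + 2 * ε) := by nlinarith [hAP.1, hAP.2, hAM.1, hAM.2]
  nlinarith [key, hIpos]
/-- Upper envelope competitor: replace `f` on `[u,v]` by the largest `a`-Lipschitz function
with the same boundary values. -/
noncomputable def envU (a : ℝ) (f : ℝ → ℝ) (u v x : ℝ) : ℝ :=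
  if x ∈ Icc u v then min (f u + a * (x - u)) (f v + a * (v - x)) else f x

/-- Lower envelope competitor. -/
noncomputable def envL (a : ℝ) (f : ℝ → ℝ) (u v x : ℝ) : ℝ :=
  if x ∈ Icc u v then max (f u - a * (x - u)) (f v - a * (v - x)) else f x

section env
variable {a : ℝ} {f : ℝ → ℝ} {u v : ℝ}

lemma envU_off (x : ℝ) (hx : x ∉ Icc u v) : envU a f u v x = f x := if_neg hx
lemma envL_off (x : ℝ) (hx : x ∉ Icc u v) : envL a f u v x = f x := if_neg hx

lemma envU_ge (ha : 0 < a) (hf : memFplus a f) (hu : 0 ≤ u) {x : ℝ} (hx : x ∈ Icc u v) :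
    f x ≤ envU a f u v x := by
  have hx0 : 0 ≤ x := le_trans hu hx.1
  have h1 := abs_le.1 (hf.lip x u hx0 hu)
  have h2 := abs_le.1 (hf.lip x v hx0 (le_trans hx0 hx.2))
  rw [envU, if_pos hx]
  rw [abs_of_nonneg (by linarith [hx.1])] at h1
  rw [abs_of_nonpos (by linarith [hx.2])] at h2
  exact le_min (by linarith [h1.2]) (by linarith [h2.2])

lemma envU_le (ha : 0 < a) (hf : memFplus a f) (hu : 0 ≤ u) {x : ℝ} (hx : x ∈ Icc u v) :
    envU a f u v x ≤ f x + 2 * a * (v - u) := by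
  have hx0 : 0 ≤ x := le_trans hu hx.1
  have h2 := abs_le.1 (hf.lip x v hx0 (le_trans hx0 hx.2))
  rw [abs_of_nonpos (by linarith [hx.2])] at h2
  rw [envU, if_pos hx]
  refine le_trans (min_le_right _ _) ?_
  have : f v ≤ f x + a * (v - x) := by linarith [h2.1]
  have hxu : u ≤ x := hx.1
  have hxv : x ≤ v := hx.2
  nlinarith

lemma envL_le (ha : 0 < a) (hf : memFplus a f) (hu : 0 ≤ u) {x : ℝ} (hx : x ∈ Icc u v) :
    envL a f u v x ≤ f x := by
  have hx0 : 0 ≤ x := le_trans hu hx.1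
  have h1 := abs_le.1 (hf.lip x u hx0 hu)
  have h2 := abs_le.1 (hf.lip x v hx0 (le_trans hx0 hx.2))
  rw [abs_of_nonneg (by linarith [hx.1])] at h1
  rw [abs_of_nonpos (by linarith [hx.2])] at h2
  rw [envL, if_pos hx]
  exact max_le (by linarith [h1.1]) (by linarith [h2.1])

lemma envL_ge (ha : 0 < a) (hf : memFplus a f) (hu : 0 ≤ u) {x : ℝ} (hx : x ∈ Icc u v) :
    f x - 2 * a * (v - u) ≤ envL a f u v x := by
  have hx0 : 0 ≤ x := le_trans hu hx.1
  have h2 := abs_le.1 (hf.lip x v hx0 (le_trans hx0 hx.2))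
  rw [abs_of_nonpos (by linarith [hx.2])] at h2
  rw [envL, if_pos hx]
  refine le_trans ?_ (le_max_right _ _)
  have hxu : u ≤ x := hx.1
  have hxv : x ≤ v := hx.2
  nlinarith [h2.2]

lemma envU_mem (ha : 0 < a) (hf : memFplus a f) (hu : 0 < u) (huv : u ≤ v) :
    memFplus a (envU a f u v) := by
  have hu0 : (0:ℝ) ≤ u := hu.le
  refine ⟨?_, ?_, ?_, ?_⟩
  · intro x hx
    by_cases h : x ∈ Icc u v
    · exact le_trans (hf.nonneg x hx) (envU_ge ha hf hu0 h)
    · rw [envU_off x h]; exact hf.nonneg x hx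
  · -- Lipschitz
    have key : ∀ x y : ℝ, 0 ≤ y → x ∈ Icc u v → y ∉ Icc u v →
        |envU a f u v x - envU a f u v y| ≤ a * |x - y| := by
      intro x y hy0 hx hy
      have hx0 : 0 ≤ x := le_trans hu0 hx.1
      rw [envU_off y hy]
      have hlow : f y - envU a f u v x ≤ a * |x - y| := by
        have := abs_le.1 (hf.lip y x hy0 hx0)
        have h2 := envU_ge ha hf hu0 hx
        rw [abs_sub_comm] at this
        linarith [this.2, (abs_le.1 (hf.lip x y hx0 hy0)).2]
      have hup : envU a f u v x - f y ≤ a * |x - y| := by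
        rcases lt_or_ge y u with h | hge
        · -- y < u
          have hxy : |x - y| = x - y := abs_of_nonneg (by linarith [hx.1])
          have h1 := abs_le.1 (hf.lip u y hu0 hy0)
          rw [abs_of_nonneg (by linarith)] at h1
          have hb : envU a f u v x ≤ f u + a * (x - u) := by
            rw [envU, if_pos hx]; exact min_le_left _ _
          rw [hxy]
          linarith [h1.2, hx.1]
        · -- v < y
          have h : v < y := by
            by_contra hvy
            push_neg at hvy
            exact hy ⟨hge, hvy⟩
          have hxy : |x - y| = y - x := by rw [abs_of_nonpos (by linarith [hx.2] : x - y ≤ 0)]; ring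
          have hv0 : (0:ℝ) ≤ v := le_trans hu0 huv
          have h1 := abs_le.1 (hf.lip v y hv0 hy0)
          rw [abs_of_nonpos (by linarith)] at h1
          have hb : envU a f u v x ≤ f v + a * (v - x) := by
            rw [envU, if_pos hx]; exact min_le_right _ _
          rw [hxy]
          linarith [h1.1, hx.2]
      exact abs_le.2 ⟨by linarith [hlow], hup⟩
    intro x y hx0 hy0
    by_cases hx : x ∈ Icc u v <;> by_cases hy : y ∈ Icc u v
    · rw [envU, if_pos hx, envU, if_pos hy]
      refine le_trans (abs_min_sub_min_le_max _ _ _ _) ?_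
      have e1 : f u + a * (x - u) - (f u + a * (y - u)) = a * (x - y) := by ring
      have e2 : f v + a * (v - x) - (f v + a * (v - y)) = -(a * (x - y)) := by ring
      rw [e1, e2, abs_neg, abs_mul, abs_of_pos ha]
      simp
    · exact key x y hy0 hx hy
    · rw [abs_sub_comm, abs_sub_comm x y]; exact key y x hx0 hy hx
    · rw [envU_off x hx, envU_off y hy]; exact hf.lip x y hx0 hy0
  · rw [envU_off 0 (fun h => absurd h.1 (not_le.2 hu))]; exact hf.one
  · have heq : ∀ᶠ x in nhdsWithin 0 (Ici (0:ℝ)), envU a f u v x = f x := by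
      filter_upwards [mem_nhdsWithin_of_mem_nhds (Iio_mem_nhds hu)] with x hx
      exact envU_off x (fun h => absurd h.1 (not_le.2 hx))
    exact hf.2.2.2.congr_of_eventuallyEq heq
      (by rw [envU_off 0 (fun h => absurd h.1 (not_le.2 hu))])

lemma envL_mem (ha : 0 < a) (hf : memFplus a f) (hu : 0 < u) (huv : u ≤ v)
    (hpos : 0 ≤ f u - a * (v - u)) :
    memFplus a (envL a f u v) := by
  have hu0 : (0:ℝ) ≤ u := hu.le
  refine ⟨?_, ?_, ?_, ?_⟩
  · intro x hx
    by_cases h : x ∈ Icc u v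
    · rw [envL, if_pos h]
      refine le_trans ?_ (le_max_left _ _)
      have := h.1; have := h.2
      nlinarith
    · rw [envL_off x h]; exact hf.nonneg x hx
  · have key : ∀ x y : ℝ, 0 ≤ y → x ∈ Icc u v → y ∉ Icc u v →
        |envL a f u v x - envL a f u v y| ≤ a * |x - y| := by
      intro x y hy0 hx hy
      have hx0 : 0 ≤ x := le_trans hu0 hx.1
      rw [envL_off y hy]
      have hup : envL a f u v x - f y ≤ a * |x - y| := by
        have h2 := envL_le ha hf hu0 hx
        have := (abs_le.1 (hf.lip x y hx0 hy0)).2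
        linarith
      have hlow : f y - envL a f u v x ≤ a * |x - y| := by
        rcases lt_or_ge y u with h | hge
        ·
          have hxy : |x - y| = x - y := abs_of_nonneg (by linarith [hx.1])
          have h1 := abs_le.1 (hf.lip u y hu0 hy0)
          rw [abs_of_nonneg (by linarith)] at h1
          have hb : f u - a * (x - u) ≤ envL a f u v x := by
            rw [envL, if_pos hx]; exact le_max_left _ _
          rw [hxy]
          linarith [h1.1, hx.1]
        · have h : v < y := by
            by_contra hvy
            push_neg at hvy
            exact hy ⟨hge, hvy⟩
          have hxy : |x - y| = y - x := by rw [abs_of_nonpos (by linarith [hx.2] : x - y ≤ 0)]; ring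
          have hv0 : (0:ℝ) ≤ v := le_trans hu0 huv
          have h1 := abs_le.1 (hf.lip v y hv0 hy0)
          rw [abs_of_nonpos (by linarith)] at h1
          have hb : f v - a * (v - x) ≤ envL a f u v x := by
            rw [envL, if_pos hx]; exact le_max_right _ _
          rw [hxy]
          linarith [h1.2, hx.2]
      exact abs_le.2 ⟨by linarith, hup⟩
    intro x y hx0 hy0
    by_cases hx : x ∈ Icc u v <;> by_cases hy : y ∈ Icc u v
    · rw [envL, if_pos hx, envL, if_pos hy]
      refine le_trans (abs_max_sub_max_le_max _ _ _ _) ?_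
      have e1 : f u - a * (x - u) - (f u - a * (y - u)) = -(a * (x - y)) := by ring
      have e2 : f v - a * (v - x) - (f v - a * (v - y)) = a * (x - y) := by ring
      rw [e1, e2, abs_neg, abs_mul, abs_of_pos ha]
      simp
    · exact key x y hy0 hx hy
    · rw [abs_sub_comm, abs_sub_comm x y]; exact key y x hx0 hy hx
    · rw [envL_off x hx, envL_off y hy]; exact hf.lip x y hx0 hy0
  · rw [envL_off 0 (fun h => absurd h.1 (not_le.2 hu))]; exact hf.one
  · have heq : ∀ᶠ x in nhdsWithin 0 (Ici (0:ℝ)), envL a f u v x = f x := by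
      filter_upwards [mem_nhdsWithin_of_mem_nhds (Iio_mem_nhds hu)] with x hx
      exact envL_off x (fun h => absurd h.1 (not_le.2 hx))
    exact hf.2.2.2.congr_of_eventuallyEq heq
      (by rw [envL_off 0 (fun h => absurd h.1 (not_le.2 hu))])

/-- Rigidity: if `f` coincides with its upper envelope on `[u,v]`, it consists of two
affine pieces with slopes `a` and `-a`. -/
lemma envU_rigid (ha : 0 < a) (hf : memFplus a f) (hu : 0 ≤ u) (huv : u ≤ v)
    (heq : ∀ x ∈ Icc u v, envU a f u v x = f x) :
    ∃ m ∈ Icc u v, (∀ x ∈ Icc u m, f x = f u + a * (x - u)) ∧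
      (∀ x ∈ Icc m v, f x = f v + a * (v - x)) := by
  set m := (f v - f u) / (2 * a) + (u + v) / 2 with hm
  have hlip := abs_le.1 (hf.lip v u (le_trans hu huv) hu)
  rw [abs_of_nonneg (by linarith)] at hlip
  have hmIcc : m ∈ Icc u v := by
    constructor
    · rw [hm, div_add' _ _ _ (by positivity), le_div_iff₀ (by positivity)]
      nlinarith [hlip.1]
    · rw [hm, div_add' _ _ _ (by positivity), div_le_iff₀ (by positivity)]
      nlinarith [hlip.2]
  refine ⟨m, hmIcc, fun x hx => ?_, fun x hx => ?_⟩
  · have hxIcc : x ∈ Icc u v := ⟨hx.1, le_trans hx.2 hmIcc.2⟩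
    have h1 : f u + a * (x - u) ≤ f v + a * (v - x) := by
      have := hx.2
      rw [hm] at this
      rw [div_add' _ _ _ (by positivity)] at this
      have := (le_div_iff₀ (by positivity : (0:ℝ) < 2 * a)).1 this
      nlinarith
    rw [← heq x hxIcc, envU, if_pos hxIcc, min_eq_left h1]
  · have hxIcc : x ∈ Icc u v := ⟨le_trans hmIcc.1 hx.1, hx.2⟩
    have h1 : f v + a * (v - x) ≤ f u + a * (x - u) := by
      have := hx.1
      rw [hm] at this
      rw [div_add' _ _ _ (by positivity)] at this
      have := (div_le_iff₀ (by positivity : (0:ℝ) < 2 * a)).1 this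
      nlinarith
    rw [← heq x hxIcc, envU, if_pos hxIcc, min_eq_right h1]

lemma envL_rigid (ha : 0 < a) (hf : memFplus a f) (hu : 0 ≤ u) (huv : u ≤ v)
    (heq : ∀ x ∈ Icc u v, envL a f u v x = f x) :
    ∃ m ∈ Icc u v, (∀ x ∈ Icc u m, f x = f u - a * (x - u)) ∧
      (∀ x ∈ Icc m v, f x = f v - a * (v - x)) := by
  set m := (f u - f v) / (2 * a) + (u + v) / 2 with hm
  have hlip := abs_le.1 (hf.lip v u (le_trans hu huv) hu)
  rw [abs_of_nonneg (by linarith)] at hlip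
  have hmIcc : m ∈ Icc u v := by
    constructor
    · rw [hm, div_add' _ _ _ (by positivity), le_div_iff₀ (by positivity)]
      nlinarith [hlip.2]
    · rw [hm, div_add' _ _ _ (by positivity), div_le_iff₀ (by positivity)]
      nlinarith [hlip.1]
  refine ⟨m, hmIcc, fun x hx => ?_, fun x hx => ?_⟩
  · have hxIcc : x ∈ Icc u v := ⟨hx.1, le_trans hx.2 hmIcc.2⟩
    have h1 : f v - a * (v - x) ≤ f u - a * (x - u) := by
      have := hx.2
      rw [hm] at this
      rw [div_add' _ _ _ (by positivity)] at this
      have := (le_div_iff₀ (by positivity : (0:ℝ) < 2 * a)).1 this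
      nlinarith
    rw [← heq x hxIcc, envL, if_pos hxIcc, max_eq_left h1]
  · have hxIcc : x ∈ Icc u v := ⟨le_trans hmIcc.1 hx.1, hx.2⟩
    have h1 : f u - a * (x - u) ≤ f v - a * (v - x) := by
      have := hx.1
      rw [hm] at this
      rw [div_add' _ _ _ (by positivity)] at this
      have := (div_le_iff₀ (by positivity : (0:ℝ) < 2 * a)).1 this
      nlinarith
    rw [← heq x hxIcc, envL, if_pos hxIcc, max_eq_right h1]

end env
/-- A nonnegative continuous function on `[u,v]` with zero integral vanishes. -/
lemma eqZero_of_setIntegral_eqZero {g : ℝ → ℝ} {u v : ℝ} (huv : u < v)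
    (hc : ContinuousOn g (Icc u v)) (hnn : ∀ x ∈ Icc u v, 0 ≤ g x)
    (hz : (∫ x in Icc u v, g x) = 0) : ∀ x ∈ Icc u v, g x = 0 := by
  have hint : IntegrableOn g (Icc u v) := hc.integrableOn_compact isCompact_Icc
  have hnn' : 0 ≤ᵐ[volume.restrict (Icc u v)] g := by
    have := (ae_restrict_iff' (μ := volume) (s := Icc u v)
      (p := fun x : ℝ => (0:ℝ) ≤ g x) measurableSet_Icc).2
      (Eventually.of_forall hnn)
    exact this
  have hae : g =ᵐ[volume.restrict (Icc u v)] 0 :=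
    (integral_eq_zero_iff_of_nonneg_ae hnn' hint).1 hz
  intro x₀ hx₀
  by_contra hne
  have hpos : 0 < g x₀ := lt_of_le_of_ne (hnn x₀ hx₀) (Ne.symm hne)
  obtain ⟨δ, hδ, hball⟩ := Metric.continuousWithinAt_iff.1 (hc x₀ hx₀) (g x₀ / 2)
    (by positivity)
  set I := Ioo (max u (x₀ - δ)) (min v (x₀ + δ)) with hI
  have hIsub : I ⊆ Icc u v := fun x hx =>
    ⟨le_of_lt (lt_of_le_of_lt (le_max_left _ _) hx.1),
     le_of_lt (lt_of_lt_of_le hx.2 (min_le_left _ _))⟩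
  have hIpos : max u (x₀ - δ) < min v (x₀ + δ) := by
    apply max_lt <;> apply lt_min
    · exact huv
    · linarith [hx₀.1]
    · linarith [hx₀.2]
    · linarith
  have hIg : ∀ x ∈ I, g x ≠ 0 := by
    intro x hx
    have hd : dist x x₀ < δ := by
      rw [Real.dist_eq, abs_lt]
      constructor
      · linarith [lt_of_le_of_lt (le_max_right u (x₀ - δ)) hx.1]
      · linarith [lt_of_lt_of_le hx.2 (min_le_right v (x₀ + δ))]
    have := hball (hIsub hx) hd
    rw [Real.dist_eq, abs_lt] at this
    have hgt : g x₀ / 2 < g x := by linarith [this.1]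
    have h0 : (0:ℝ) < g x₀ / 2 := by positivity
    exact ne_of_gt (lt_trans h0 hgt)
  have hnull : volume.restrict (Icc u v) {x | ¬ g x = 0} = 0 := ae_iff.1 hae
  have hle : volume.restrict (Icc u v) I = 0 :=
    measure_mono_null (fun x hx => hIg x hx) hnull
  rw [Measure.restrict_apply measurableSet_Ioo, inter_eq_self_of_subset_left hIsub,
    Real.volume_Ioo] at hle
  rw [ENNReal.ofReal_eq_zero] at hle
  linarith

/-- Derivative of a function equal to an affine map on an interval. -/
lemma deriv_affine_on {f : ℝ → ℝ} {s t c b : ℝ}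
    (h : ∀ x ∈ Icc s t, f x = c + b * (x - s)) {x : ℝ} (hx : x ∈ Ioo s t) :
    deriv f x = b := by
  have hev : f =ᶠ[nhds x] fun y => c + b * (y - s) := by
    filter_upwards [isOpen_Ioo.mem_nhds hx] with y hy
    exact h y ⟨hy.1.le, hy.2.le⟩
  rw [hev.deriv_eq]
  have : HasDerivAt (fun y : ℝ => c + b * (y - s)) b x := by
    simpa using (((hasDerivAt_id x).sub_const s).const_mul b).const_add c
  exact this.deriv

lemma derivAEeq_of_forall {f : ℝ → ℝ} {s t c : ℝ} (h : ∀ x ∈ Ioo s t, deriv f x = c) :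
    derivAEeq f (Ioo s t) c := by
  have := (ae_restrict_iff' (μ := volume) (s := Ioo s t)
    (p := fun x : ℝ => deriv f x = c) measurableSet_Ioo).2 (Eventually.of_forall h)
  exact this

/-- Contradiction between an a.e. derivative value and an exact one on an overlapping
interval. -/
lemma derivAEeq_overlap_contra {f : ℝ → ℝ} {s t s' t' c d : ℝ} (hcd : c ≠ d)
    (hsub : Ioo s' t' ⊆ Ioo s t) (hne : s' < t')
    (hae : derivAEeq f (Ioo s t) d) (hall : ∀ x ∈ Ioo s' t', deriv f x = c) : False := by
  have hnull : volume.restrict (Ioo s t) {y | ¬ deriv f y = d} = 0 := ae_iff.1 hae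
  have hle : volume.restrict (Ioo s t) (Ioo s' t') = 0 :=
    measure_mono_null (fun x hx => by
      simp only [mem_setOf_eq]
      rw [hall x hx]
      exact hcd) hnull
  rw [Measure.restrict_apply measurableSet_Ioo, inter_eq_self_of_subset_left hsub,
    Real.volume_Ioo, ENNReal.ofReal_eq_zero] at hle
  linarith

lemma gfun_le_of_Dker {a p c d : ℝ} (hp : 0 < p) (h : Dker a p c ≤ Dker a p d) :
    gfun a (c / p) ≤ gfun a (d / p) := by
  rw [gfun_eq_Dker hp, gfun_eq_Dker hp]
  have hp3 : (0:ℝ) < p ^ 3 := by positivity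
  nlinarith

lemma le_of_forall_neg_eps {x : ℝ} (h : ∀ ε : ℝ, 0 < ε → -(2 * ε) ≤ x) : 0 ≤ x := by
  by_contra hx
  push_neg at hx
  have := h (-x / 4) (by linarith)
  linarith
lemma envU_contOn {a : ℝ} {f : ℝ → ℝ} {u v : ℝ} :
    ContinuousOn (envU a f u v) (Icc u v) := by
  have h : ContinuousOn (fun x => min (f u + a * (x - u)) (f v + a * (v - x)))
      (Icc u v) := by fun_prop
  exact h.congr (fun x hx => if_pos hx)

lemma envL_contOn {a : ℝ} {f : ℝ → ℝ} {u v : ℝ} :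
    ContinuousOn (envL a f u v) (Icc u v) := by
  have h : ContinuousOn (fun x => max (f u - a * (x - u)) (f v - a * (v - x)))
      (Icc u v) := by fun_prop
  exact h.congr (fun x hx => if_pos hx)

lemma envU_zero_cases {a : ℝ} {f : ℝ → ℝ} {u v : ℝ} (ha : 0 < a) (hf : memFplus a f)
    (hu : 0 < u) (huv : u < v)
    (hzero : (∫ y in Icc u v, (envU a f u v y - f y)) ≤ 0) :
    ∃ m ∈ Icc u v, (∀ x ∈ Ioo u m, deriv f x = a) ∧ (∀ x ∈ Ioo m v, deriv f x = -a) := by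
  have hIccIci : Icc u v ⊆ Ici (0:ℝ) := fun x hx => le_trans hu.le hx.1
  have hcontΔ : ContinuousOn (fun y => envU a f u v y - f y) (Icc u v) :=
    envU_contOn.sub (hf.continuousOn.mono hIccIci)
  have hnn : ∀ x ∈ Icc u v, 0 ≤ envU a f u v x - f x := fun x hx =>
    sub_nonneg.2 (envU_ge ha hf hu.le hx)
  have hge : 0 ≤ ∫ y in Icc u v, (envU a f u v y - f y) :=
    setIntegral_nonneg measurableSet_Icc hnn
  have heq0 := eqZero_of_setIntegral_eqZero huv hcontΔ hnn (le_antisymm hzero hge)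
  have heq : ∀ x ∈ Icc u v, envU a f u v x = f x := fun x hx =>
    sub_eq_zero.1 (heq0 x hx)
  obtain ⟨m, hm, h1, h2⟩ := envU_rigid ha hf hu.le huv.le heq
  refine ⟨m, hm, fun x hx => deriv_affine_on h1 hx, fun x hx => ?_⟩
  refine deriv_affine_on (c := f v + a * (v - m)) (b := -a) (s := m) (t := v)
    (fun x hx' => ?_) hx
  rw [h2 x hx']; ring

lemma envL_zero_cases {a : ℝ} {f : ℝ → ℝ} {u v : ℝ} (ha : 0 < a) (hf : memFplus a f)
    (hu : 0 < u) (huv : u < v)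
    (hzero : (∫ y in Icc u v, (f y - envL a f u v y)) ≤ 0) :
    ∃ m ∈ Icc u v, (∀ x ∈ Ioo u m, deriv f x = -a) ∧ (∀ x ∈ Ioo m v, deriv f x = a) := by
  have hIccIci : Icc u v ⊆ Ici (0:ℝ) := fun x hx => le_trans hu.le hx.1
  have hcontΔ : ContinuousOn (fun y => f y - envL a f u v y) (Icc u v) :=
    (hf.continuousOn.mono hIccIci).sub envL_contOn
  have hnn : ∀ x ∈ Icc u v, 0 ≤ f x - envL a f u v x := fun x hx =>
    sub_nonneg.2 (envL_le ha hf hu.le hx)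
  have hge : 0 ≤ ∫ y in Icc u v, (f y - envL a f u v y) :=
    setIntegral_nonneg measurableSet_Icc hnn
  have heq0 := eqZero_of_setIntegral_eqZero huv hcontΔ hnn (le_antisymm hzero hge)
  have heq : ∀ x ∈ Icc u v, envL a f u v x = f x := fun x hx =>
    (sub_eq_zero.1 (heq0 x hx)).symm
  obtain ⟨m, hm, h1, h2⟩ := envL_rigid ha hf hu.le huv.le heq
  refine ⟨m, hm, fun x hx => ?_, fun x hx => ?_⟩
  · refine deriv_affine_on (c := f u) (b := -a) (s := u) (t := m)
      (fun x hx' => ?_) hx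
    rw [h1 x hx']; ring
  · refine deriv_affine_on (c := f v - a * (v - m)) (b := a) (s := m) (t := v)
      (fun x hx' => ?_) hx
    rw [h2 x hx']; ring
/-- If arbitrarily small admissible intervals around `p` exist on which `f` is rigidly
not equal to its upper envelope, then the first variation gives `Dker⁻ ≤ Dker⁺`. -/
lemma Dker_up {a : ℝ} {f : ℝ → ℝ} (ha : 0 < a) (ha1 : a ≤ 1) (hf : memFplus a f)
    (hmin : ∀ ψ : ℝ → ℝ, memFplus a ψ → Hplus a f ≤ Hplus a ψ)
    {p : ℝ} (hp : 0 < p)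
    (hsel : ∀ δ : ℝ, 0 < δ → δ < p / 2 →
      ∃ u v : ℝ, p - δ ≤ u ∧ u ≤ p ∧ p ≤ v ∧ v ≤ p + δ ∧ u < v ∧
        ∀ m ∈ Icc u v, ¬ ((∀ x ∈ Ioo u m, deriv f x = a) ∧
          (∀ x ∈ Ioo m v, deriv f x = -a))) :
    Dker a p (1 - f p) ≤ Dker a p (1 + f p) := by
  refine sub_nonneg.1 (le_of_forall_neg_eps fun ε hε => ?_)
  obtain ⟨δ, hδpos, hδhalf, HS⟩ := step ha ha1 hf hmin hp hε
  obtain ⟨u, v, hu1, hu2, hv1, hv2, huv, hrig⟩ := hsel δ hδpos hδhalf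
  have hupos : 0 < u := by linarith
  set φ := envU a f u v with hφ
  have hmem := envU_mem ha hf hupos huv.le
  have hoff : ∀ x, x ∉ Icc u v → φ x = f x := fun x hx => envU_off x hx
  have hb : ∀ x ∈ Icc u v, 0 ≤ (1:ℝ) * (φ x - f x) ∧
      (1:ℝ) * (φ x - f x) ≤ 2 * a * (v - u) := by
    intro x hx
    rw [one_mul]
    exact ⟨sub_nonneg.2 (envU_ge ha hf hupos.le hx),
      by linarith [envU_le ha hf hupos.le hx]⟩
  have hIpos : 0 < ∫ y in Icc u v, (1:ℝ) * (φ y - f y) := by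
    have hcong : (fun y => (1:ℝ) * (φ y - f y)) = fun y => φ y - f y := by
      funext y; ring
    rw [hcong]
    by_contra hle
    push_neg at hle
    obtain ⟨m, hm, h1, h2⟩ := envU_zero_cases ha hf hupos huv hle
    exact hrig m hm ⟨h1, h2⟩
  have := HS 1 u v φ (Or.inl rfl) hu1 hu2 hv1 hv2 hmem hoff hb hIpos
  linarith

lemma Dker_down {a : ℝ} {f : ℝ → ℝ} (ha : 0 < a) (ha1 : a ≤ 1) (hf : memFplus a f)
    (hmin : ∀ ψ : ℝ → ℝ, memFplus a ψ → Hplus a f ≤ Hplus a ψ)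
    {p : ℝ} (hp : 0 < p)
    (hsel : ∀ δ : ℝ, 0 < δ → δ < p / 2 →
      ∃ u v : ℝ, p - δ ≤ u ∧ u ≤ p ∧ p ≤ v ∧ v ≤ p + δ ∧ u < v ∧
        0 ≤ f u - a * (v - u) ∧
        ∀ m ∈ Icc u v, ¬ ((∀ x ∈ Ioo u m, deriv f x = -a) ∧
          (∀ x ∈ Ioo m v, deriv f x = a))) :
    Dker a p (1 + f p) ≤ Dker a p (1 - f p) := by
  refine sub_nonneg.1 (le_of_forall_neg_eps fun ε hε => ?_)
  obtain ⟨δ, hδpos, hδhalf, HS⟩ := step ha ha1 hf hmin hp hε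
  obtain ⟨u, v, hu1, hu2, hv1, hv2, huv, hpos, hrig⟩ := hsel δ hδpos hδhalf
  have hupos : 0 < u := by linarith
  set φ := envL a f u v with hφ
  have hmem := envL_mem ha hf hupos huv.le hpos
  have hoff : ∀ x, x ∉ Icc u v → φ x = f x := fun x hx => envL_off x hx
  have hb : ∀ x ∈ Icc u v, 0 ≤ (-1:ℝ) * (φ x - f x) ∧
      (-1:ℝ) * (φ x - f x) ≤ 2 * a * (v - u) := by
    intro x hx
    constructor
    · nlinarith [envL_le ha hf hupos.le hx]
    · nlinarith [envL_ge ha hf hupos.le hx]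
  have hIpos : 0 < ∫ y in Icc u v, (-1:ℝ) * (φ y - f y) := by
    have hcong : (fun y => (-1:ℝ) * (φ y - f y)) = fun y => f y - φ y := by
      funext y; ring
    rw [hcong]
    by_contra hle
    push_neg at hle
    obtain ⟨m, hm, h1, h2⟩ := envL_zero_cases ha hf hupos huv hle
    exact hrig m hm ⟨h1, h2⟩
  have := HS (-1) u v φ (Or.inr rfl) hu1 hu2 hv1 hv2 hmem hoff hb hIpos
  linarith
/-- Lemma 3.1: first-variation conditions satisfied by any minimizer of `H⁺` on `F⁺`. -/
theorem minimizer_first_variation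
    (a : ℝ) (ha : 0 < a) (ha' : a ≤ 3 / 10)
    (f : ℝ → ℝ) (hf : memFplus a f)
    (hmin : ∀ φ : ℝ → ℝ, memFplus a φ → Hplus a f ≤ Hplus a φ)
    (p : ℝ) (hp : 0 < p) :
    ((∀ ε : ℝ, 0 < ε →
        ¬ derivAEeq f (Ioo p (p + ε)) a ∧ ¬ derivAEeq f (Ioo p (p + ε)) (-a)) →
      gfun a ((1 + f p) / p) = gfun a ((1 - f p) / p)) ∧
    ((∀ ε : ℝ, 0 < ε →
        ¬ derivAEeq f (Ioo (p - ε) p) a ∧ ¬ derivAEeq f (Ioo (p - ε) p) (-a)) →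
      gfun a ((1 + f p) / p) = gfun a ((1 - f p) / p)) ∧
    ((∃ ε : ℝ, 0 < ε ∧
        derivAEeq f (Ioo (p - ε) p) (-a) ∧ derivAEeq f (Ioo p (p + ε)) a) →
      gfun a ((1 + f p) / p) ≥ gfun a ((1 - f p) / p)) ∧
    ((∃ ε : ℝ, 0 < ε ∧
        derivAEeq f (Ioo (p - ε) p) a ∧ derivAEeq f (Ioo p (p + ε)) (-a)) →
      gfun a ((1 + f p) / p) ≤ gfun a ((1 - f p) / p)) := by
  have ha1 : a ≤ 1 := by linarith
  have hfp0 : 0 ≤ f p := hf.1 p hp.le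
  have hane : a ≠ -a := by intro h; linarith
  have hane' : -a ≠ a := by intro h; linarith
  refine ⟨?_, ?_, ?_, ?_⟩
  · -- (i) two-sided non-degeneracy on the right of p
    intro hyp
    rcases eq_or_lt_of_le hfp0 with hfp | hfp
    · rw [← hfp]; norm_num
    · have hup : Dker a p (1 - f p) ≤ Dker a p (1 + f p) := by
        apply Dker_up ha ha1 hf hmin hp
        intro δ hδpos hδhalf
        refine ⟨p, p + δ/2, by linarith, le_rfl, by linarith, by linarith, by linarith, ?_⟩
        rintro m hm ⟨h1, h2⟩
        rcases eq_or_lt_of_le hm.1 with hmp | hmp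
        · exact (hyp (δ/2) (by linarith)).2
            (derivAEeq_of_forall (fun x hx => h2 x (by rw [← hmp]; exact hx)))
        · refine (hyp (m - p) (by linarith)).1 ?_
          rw [show p + (m - p) = m by ring]
          exact derivAEeq_of_forall h1
      have hdn : Dker a p (1 + f p) ≤ Dker a p (1 - f p) := by
        apply Dker_down ha ha1 hf hmin hp
        intro δ hδpos hδhalf
        have ht0 : 0 < min (δ/2) (f p / (4*a)) := lt_min (by linarith) (by positivity)
        have ht1 : min (δ/2) (f p / (4*a)) ≤ δ/2 := min_le_left _ _
        have ht2 : min (δ/2) (f p / (4*a)) ≤ f p / (4*a) := min_le_right _ _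
        set t := min (δ/2) (f p / (4*a)) with htdef
        have hat : a * t ≤ f p / 4 := by
          calc a * t ≤ a * (f p / (4*a)) := by nlinarith
            _ = f p / 4 := by field_simp
        refine ⟨p, p + t, by linarith, le_rfl, by linarith, by linarith, by linarith,
          ?_, ?_⟩
        · rw [show p + t - p = t by ring]; linarith
        · rintro m hm ⟨h1, h2⟩
          rcases eq_or_lt_of_le hm.1 with hmp | hmp
          · exact (hyp t ht0).1
              (derivAEeq_of_forall (fun x hx => h2 x (by rw [← hmp]; exact hx)))
          · refine (hyp (m - p) (by linarith)).2 ?_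
            rw [show p + (m - p) = m by ring]
            exact derivAEeq_of_forall h1
      exact le_antisymm (gfun_le_of_Dker hp hdn) (gfun_le_of_Dker hp hup)
  · -- (ii) two-sided non-degeneracy on the left of p
    intro hyp
    rcases eq_or_lt_of_le hfp0 with hfp | hfp
    · rw [← hfp]; norm_num
    · have hup : Dker a p (1 - f p) ≤ Dker a p (1 + f p) := by
        apply Dker_up ha ha1 hf hmin hp
        intro δ hδpos hδhalf
        refine ⟨p - δ/2, p, by linarith, by linarith, le_rfl, by linarith, by linarith, ?_⟩
        rintro m hm ⟨h1, h2⟩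
        rcases eq_or_lt_of_le hm.2 with hmp | hmp
        · refine (hyp (δ/2) (by linarith)).1 ?_
          rw [show p - δ/2 = p - δ/2 from rfl]
          exact derivAEeq_of_forall (fun x hx => h1 x (by rw [hmp]; exact hx))
        · refine (hyp (p - m) (by linarith)).2 ?_
          rw [show p - (p - m) = m by ring]
          exact derivAEeq_of_forall h2
      have hdn : Dker a p (1 + f p) ≤ Dker a p (1 - f p) := by
        apply Dker_down ha ha1 hf hmin hp
        intro δ hδpos hδhalf
        have ht0 : 0 < min (δ/2) (f p / (4*a)) := lt_min (by linarith) (by positivity)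
        have ht1 : min (δ/2) (f p / (4*a)) ≤ δ/2 := min_le_left _ _
        have ht2 : min (δ/2) (f p / (4*a)) ≤ f p / (4*a) := min_le_right _ _
        set t := min (δ/2) (f p / (4*a)) with htdef
        have hat : a * t ≤ f p / 4 := by
          calc a * t ≤ a * (f p / (4*a)) := by nlinarith
            _ = f p / 4 := by field_simp
        have hut : 0 < p - t := by linarith
        have hfu : f p - a * t ≤ f (p - t) := by
          have habs : |p - t - p| = t := by
            rw [show p - t - p = -t by ring, abs_neg, abs_of_nonneg ht0.le]
          have h := abs_le.1 (hf.lip (p - t) p hut.le hp.le)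
          rw [habs] at h
          linarith [h.1]
        refine ⟨p - t, p, by linarith, by linarith, le_rfl, by linarith, by linarith,
          ?_, ?_⟩
        · rw [show p - (p - t) = t by ring]; linarith
        · rintro m hm ⟨h1, h2⟩
          rcases eq_or_lt_of_le hm.2 with hmp | hmp
          · refine (hyp t ht0).2 ?_
            rw [show p - t = p - t from rfl]
            exact derivAEeq_of_forall (fun x hx => h1 x (by rw [hmp]; exact hx))
          · refine (hyp (p - m) (by linarith)).1 ?_
            rw [show p - (p - m) = m by ring]
            exact derivAEeq_of_forall h2
      exact le_antisymm (gfun_le_of_Dker hp hdn) (gfun_le_of_Dker hp hup)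
  · -- (iii) corner with slopes (-a, a): local minimum shape
    rintro ⟨ε₀, hε₀, haeL, haeR⟩
    have hup : Dker a p (1 - f p) ≤ Dker a p (1 + f p) := by
      apply Dker_up ha ha1 hf hmin hp
      intro δ hδpos hδhalf
      have ht0 : 0 < min (δ/2) (ε₀/2) := lt_min (by linarith) (by linarith)
      have ht1 : min (δ/2) (ε₀/2) ≤ δ/2 := min_le_left _ _
      have ht2 : min (δ/2) (ε₀/2) ≤ ε₀/2 := min_le_right _ _
      set t := min (δ/2) (ε₀/2) with htdef
      refine ⟨p - t, p + t, by linarith, by linarith, by linarith, by linarith,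
        by linarith, ?_⟩
      rintro m hm ⟨h1, h2⟩
      rcases le_or_gt p m with hmp | hmp
      · exact derivAEeq_overlap_contra hane
          (fun x hx => ⟨by linarith [hx.1], hx.2⟩) (by linarith) haeL
          (fun x hx => h1 x ⟨hx.1, lt_of_lt_of_le hx.2 hmp⟩)
      · exact derivAEeq_overlap_contra hane'
          (fun x hx => ⟨hx.1, by linarith [hx.2]⟩) (by linarith) haeR
          (fun x hx => h2 x ⟨lt_trans hmp hx.1, hx.2⟩)
    exact gfun_le_of_Dker hp hup
  · -- (iv) corner with slopes (a, -a): local maximum shape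
    rintro ⟨ε₀, hε₀, haeL, haeR⟩
    rcases eq_or_lt_of_le hfp0 with hfp | hfp
    · rw [← hfp]; norm_num
    · apply gfun_le_of_Dker hp
      apply Dker_down ha ha1 hf hmin hp
      intro δ hδpos hδhalf
      have ht0 : 0 < min (min (δ/2) (ε₀/2)) (f p / (4*a)) :=
        lt_min (lt_min (by linarith) (by linarith)) (by positivity)
      have ht1 : min (min (δ/2) (ε₀/2)) (f p / (4*a)) ≤ δ/2 :=
        le_trans (min_le_left _ _) (min_le_left _ _)
      have ht2 : min (min (δ/2) (ε₀/2)) (f p / (4*a)) ≤ ε₀/2 :=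
        le_trans (min_le_left _ _) (min_le_right _ _)
      have ht3 : min (min (δ/2) (ε₀/2)) (f p / (4*a)) ≤ f p / (4*a) := min_le_right _ _
      set t := min (min (δ/2) (ε₀/2)) (f p / (4*a)) with htdef
      have hat : a * t ≤ f p / 4 := by
        calc a * t ≤ a * (f p / (4*a)) := by nlinarith
          _ = f p / 4 := by field_simp
      have hut : 0 < p - t := by linarith
      have hfu : f p - a * t ≤ f (p - t) := by
        have habs : |p - t - p| = t := by
          rw [show p - t - p = -t by ring, abs_neg, abs_of_nonneg ht0.le]
        have h := abs_le.1 (hf.lip (p - t) p hut.le hp.le)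
        rw [habs] at h
        linarith [h.1]
      refine ⟨p - t, p + t, by linarith, by linarith, by linarith, by linarith,
        by linarith, ?_, ?_⟩
      · rw [show p + t - (p - t) = 2 * t by ring]; linarith
      · rintro m hm ⟨h1, h2⟩
        rcases le_or_gt p m with hmp | hmp
        · exact derivAEeq_overlap_contra hane'
            (fun x hx => ⟨by linarith [hx.1], hx.2⟩) (by linarith) haeL
            (fun x hx => h1 x ⟨hx.1, lt_of_lt_of_le hx.2 hmp⟩)
        · exact derivAEeq_overlap_contra hane
            (fun x hx => ⟨hx.1, by linarith [hx.2]⟩) (by linarith) haeR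
            (fun x hx => h2 x ⟨lt_trans hmp hx.1, hx.2⟩)
end

section
/- Let γ ∈ (0,1], let f : ℝ → ℝ be twice differentiable with M := sup_{x∈ℝ} |f'(x)| < ∞, and suppose there is H ≥ 0 such that |f''(x) − f''(y)| ≤ H·|x−y|^γ for all x, y ∈ ℝ. Then for every x ∈ ℝ, |f''(x)| ≤ 2·H^{1/(1+γ)}·(M − |f'(x)|)^{γ/(1+γ)}. -/
lemma sdi_mono_key (γ : ℝ) (hγ0 : 0 < γ)
    (fd fdd : ℝ → ℝ)
    (hfdd : ∀ x, HasDerivAt fd (fdd x) x)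
    (H : ℝ) (hH : 0 ≤ H)
    (hHol : ∀ x y : ℝ, |fdd x - fdd y| ≤ H * |x - y| ^ γ)
    (x T : ℝ) (hT : 0 ≤ T) :
    fdd x * T - H * T ^ (1 + γ) / (1 + γ) ≤ fd (x + T) - fd x := by
  have h1γ : (0:ℝ) < 1 + γ := by linarith
  set φ : ℝ → ℝ := fun t => fd (x + t) - fdd x * t + H * t ^ (1 + γ) / (1 + γ) with hφ
  have hder : ∀ t : ℝ, HasDerivAt φ (fdd (x + t) - fdd x + H * t ^ γ) t := by
    intro t
    have hadd : HasDerivAt (fun s : ℝ => x + s) 1 t := (hasDerivAt_id t).const_add x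
    have h1 : HasDerivAt (fun s => fd (x + s)) (fdd (x + t)) t := by
      have := (hfdd (x + t)).comp t hadd
      simpa [Function.comp_def] using this
    have h2 : HasDerivAt (fun s : ℝ => fdd x * s) (fdd x) t := by
      simpa using (hasDerivAt_id t).const_mul (fdd x)
    have h3 : HasDerivAt (fun s : ℝ => s ^ (1 + γ)) ((1 + γ) * t ^ γ) t := by
      have := Real.hasDerivAt_rpow_const (x := t) (p := 1 + γ)
        (Or.inr (by linarith [hγ0.le]))
      simpa using this
    have h4 : HasDerivAt (fun s : ℝ => H * s ^ (1 + γ) / (1 + γ))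
        (H * ((1 + γ) * t ^ γ) / (1 + γ)) t := (h3.const_mul H).div_const (1 + γ)
    have := (h1.sub h2).add h4
    have heq : fdd (x + t) - fdd x + H * ((1 + γ) * t ^ γ) / (1 + γ)
        = fdd (x + t) - fdd x + H * t ^ γ := by
      field_simp
    rw [heq] at this
    exact this
  have hmono : MonotoneOn φ (Set.Ici (0:ℝ)) := by
    apply monotoneOn_of_deriv_nonneg (convex_Ici 0)
    · exact fun t _ => (hder t).continuousAt.continuousWithinAt
    · intro t ht
      exact (hder t).differentiableAt.differentiableWithinAt
    · intro t ht
      rw [interior_Ici] at ht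
      rw [(hder t).deriv]
      have ht0 : (0:ℝ) < t := ht
      have := hHol x (x + t)
      have habs : |x - (x + t)| = t := by
        rw [abs_sub_comm]; simp [abs_of_nonneg ht0.le]
      rw [habs] at this
      have : fdd x - fdd (x + t) ≤ H * t ^ γ := le_trans (le_abs_self _) this
      linarith
  have h0 : φ 0 ≤ φ T := hmono (Set.self_mem_Ici) hT hT
  have hz : φ 0 = fd x := by
    simp [hφ, Real.zero_rpow (by positivity : (1:ℝ) + γ ≠ 0)]
  rw [hz] at h0
  simp only [hφ] at h0
  linarith


lemma sdi_opt (γ H c D : ℝ) (hγ0 : 0 < γ) (hH : 0 ≤ H) (hc : 0 ≤ c) (hD : 0 ≤ D)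
    (h : ∀ T : ℝ, 0 ≤ T → c * T - H * T ^ (1 + γ) / (1 + γ) ≤ D) :
    c ≤ 2 * H ^ ((1:ℝ) / (1 + γ)) * D ^ (γ / (1 + γ)) := by
  have h1γ : (0:ℝ) < 1 + γ := by linarith
  rcases eq_or_lt_of_le hc with hc0 | hcpos
  · rw [← hc0]; positivity
  rcases eq_or_lt_of_le hH with hH0 | hHpos
  · exfalso
    have := h ((D + 1) / c) (by positivity)
    rw [← hH0] at this
    have hcc : c * ((D + 1) / c) = D + 1 := by field_simp
    rw [hcc] at this
    simp at this
    linarith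
  -- main case
  set T := (c / (2 * H)) ^ (1 / γ) with hTdef
  have hTpos : 0 < T := Real.rpow_pos_of_pos (by positivity) _
  have hTγ : T ^ γ = c / (2 * H) := by
    rw [hTdef, ← Real.rpow_mul (by positivity), one_div, inv_mul_cancel₀ hγ0.ne',
      Real.rpow_one]
  have hT1γ : T ^ (1 + γ) = T * T ^ γ := by
    rw [Real.rpow_add hTpos, Real.rpow_one]
  have key := h T hTpos.le
  rw [hT1γ, hTγ] at key
  have hHT : H * (T * (c / (2 * H))) = c * T / 2 := by field_simp
  rw [hHT] at key
  -- c*T - (c*T/2)/(1+γ) ≤ D and (c*T/2)/(1+γ) ≤ c*T/2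
  have hdiv : c * T / 2 / (1 + γ) ≤ c * T / 2 := by
    apply div_le_self (by positivity)
    linarith
  have hcT : c * T ≤ 2 * D := by linarith
  -- rewrite c^(1/γ) = T * (2H)^(1/γ)
  have hcsplit : c ^ ((1:ℝ) / γ) = T * (2 * H) ^ ((1:ℝ) / γ) := by
    have : c = (c / (2 * H)) * (2 * H) := by field_simp
    rw [this, Real.mul_rpow (by positivity) (by positivity), hTdef]
  have hpow : c ^ ((1 + γ) / γ) = c * T * (2 * H) ^ ((1:ℝ) / γ) := by
    have : (1 + γ) / γ = 1 + 1 / γ := by field_simp; ring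
    rw [this, Real.rpow_add hcpos, Real.rpow_one, hcsplit]; ring
  have hineq : c ^ ((1 + γ) / γ) ≤ 2 * D * (2 * H) ^ ((1:ℝ) / γ) := by
    rw [hpow]
    exact mul_le_mul_of_nonneg_right hcT (by positivity)
  -- raise to power γ/(1+γ)
  have hfin := Real.rpow_le_rpow (by positivity) hineq
    (le_of_lt (by positivity : (0:ℝ) < γ / (1 + γ)))
  have hL : (c ^ ((1 + γ) / γ)) ^ (γ / (1 + γ)) = c := by
    rw [← Real.rpow_mul hc]
    have he : (1 + γ) / γ * (γ / (1 + γ)) = 1 := by field_simp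
    rw [he, Real.rpow_one]
  have hR : (2 * D * (2 * H) ^ ((1:ℝ) / γ)) ^ (γ / (1 + γ))
      = 2 * H ^ ((1:ℝ) / (1 + γ)) * D ^ (γ / (1 + γ)) := by
    rw [Real.mul_rpow (by positivity) (by positivity),
      Real.mul_rpow (by positivity : (0:ℝ) ≤ 2) hD,
      ← Real.rpow_mul (by positivity : (0:ℝ) ≤ 2 * H)]
    have he2 : (1:ℝ) / γ * (γ / (1 + γ)) = 1 / (1 + γ) := by field_simp
    rw [he2, Real.mul_rpow (by positivity : (0:ℝ) ≤ 2) hH]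
    have h2 : (2:ℝ) ^ (γ / (1 + γ)) * 2 ^ ((1:ℝ) / (1 + γ)) = 2 := by
      rw [← Real.rpow_add two_pos, ← add_div, add_comm,
        div_self h1γ.ne', Real.rpow_one]
    linear_combination (D ^ (γ / (1 + γ)) * H ^ ((1:ℝ) / (1 + γ))) * h2
  rw [hL, hR] at hfin
  exact hfin

lemma sdi_main (γ : ℝ) (hγ0 : 0 < γ)
    (fd fdd : ℝ → ℝ)
    (hfdd : ∀ x, HasDerivAt fd (fdd x) x)
    (hbdd : BddAbove (Set.range fun x => |fd x|))
    (H : ℝ) (hH : 0 ≤ H)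
    (hHol : ∀ x y : ℝ, |fdd x - fdd y| ≤ H * |x - y| ^ γ)
    (x T : ℝ) (hT : 0 ≤ T) :
    fdd x * T - H * T ^ (1 + γ) / (1 + γ) ≤ (⨆ z : ℝ, |fd z|) - |fd x| := by
  have hM : ∀ z : ℝ, |fd z| ≤ ⨆ z : ℝ, |fd z| := fun z =>
    le_ciSup hbdd z
  have A := sdi_mono_key γ hγ0 fd fdd hfdd H hH hHol x T hT
  -- backward via reflection
  set g : ℝ → ℝ := fun y => -fd (-y) with hg
  set gd : ℝ → ℝ := fun y => fdd (-y) with hgd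
  have hgder : ∀ y, HasDerivAt g (gd y) y := by
    intro y
    have h1 : HasDerivAt (fun y : ℝ => -y) (-1) y := (hasDerivAt_id y).neg
    have h2 := ((hfdd (-y)).comp y h1).neg
    simpa [hg, hgd, Function.comp_def, Pi.neg_def] using h2
  have hgHol : ∀ a b : ℝ, |gd a - gd b| ≤ H * |a - b| ^ γ := by
    intro a b
    have := hHol (-a) (-b)
    have habs : |-a - -b| = |a - b| := by rw [abs_sub_comm]; ring_nf
    rw [habs] at this
    exact this
  have B := sdi_mono_key γ hγ0 g gd hgder H hH hgHol (-x) T hT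
  simp only [hg, hgd, neg_neg] at B
  have hxT : -(-x + T) = x - T := by ring
  rw [hxT] at B
  -- B : fdd x * T - E ≤ -fd (x - T) + fd x
  have h1 : fd (x + T) ≤ ⨆ z : ℝ, |fd z| := le_trans (le_abs_self _) (hM _)
  have h2 : -fd (x - T) ≤ ⨆ z : ℝ, |fd z| := le_trans (neg_le_abs _) (hM _)
  rcases abs_cases (fd x) with ⟨he, _⟩ | ⟨he, _⟩ <;> rw [he] <;> linarith

/-- Interpolation bound: if `f` is twice differentiable, `|f'| ≤ M := sup|f'| < ∞`, and `f''`
is `γ`-Hölder with constant `H`, then `|f''(x)| ≤ 2·H^{1/(1+γ)}·(M − |f'(x)|)^{γ/(1+γ)}`. -/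
theorem second_derivative_interpolation
    (γ : ℝ) (hγ0 : 0 < γ) (hγ1 : γ ≤ 1)
    (f fd fdd : ℝ → ℝ)
    (hfd : ∀ x, HasDerivAt f (fd x) x)
    (hfdd : ∀ x, HasDerivAt fd (fdd x) x)
    (hbdd : BddAbove (Set.range fun x => |fd x|))
    (H : ℝ) (hH : 0 ≤ H)
    (hHol : ∀ x y : ℝ, |fdd x - fdd y| ≤ H * |x - y| ^ γ) :
    ∀ x : ℝ, |fdd x| ≤
      2 * H ^ ((1:ℝ) / (1 + γ)) * ((⨆ z : ℝ, |fd z|) - |fd x|) ^ (γ / (1 + γ)) := by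
  intro x
  have hM : |fd x| ≤ ⨆ z : ℝ, |fd z| := le_ciSup hbdd x
  apply sdi_opt γ H _ _ hγ0 hH (abs_nonneg _) (by linarith)
  intro T hT
  rcases abs_cases (fdd x) with ⟨he, _⟩ | ⟨he, _⟩
  · rw [he]
    exact sdi_main γ hγ0 fd fdd hfdd hbdd H hH hHol x T hT
  · rw [he]
    have hfdd' : ∀ y, HasDerivAt (fun z => -fd z) ((fun z => -fdd z) y) y :=
      fun y => (hfdd y).neg
    have hbdd' : BddAbove (Set.range fun z => |(fun z => -fd z) z|) := by
      simpa [abs_neg] using hbdd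
    have hHol' : ∀ a b : ℝ, |(fun z => -fdd z) a - (fun z => -fdd z) b| ≤ H * |a - b| ^ γ := by
      intro a b
      simp only
      rw [show -fdd a - -fdd b = -(fdd a - fdd b) by ring, abs_neg]
      exact hHol a b
    have := sdi_main γ hγ0 (fun z => -fd z) (fun z => -fdd z) hfdd' hbdd' H hH hHol' x T hT
    simpa [abs_neg] using this
end

section
/- For every a ∈ (0,1), the function y ↦ h_a(y, 2 − a·y) is integrable on ℝ and ∫_ℝ h_a(y, 2 − a·y) dy = 0. Moreover, for all y ∈ ℝ one has the antiderivative identity a·(1+a²)·h_a(y, 2−a·y) = d/dy [ (1 − 3a² − 2a·(1−a²)·y) / (y² + (2 − a·y)²) ]. -/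
open MeasureTheory Filter Topology

set_option maxHeartbeats 800000 in
/-- For `a ∈ (0,1)`, `y ↦ h_a(y, 2 − a·y)` is integrable on `ℝ` with integral `0`, and
`a·(1+a²)·h_a(y, 2−a·y)` is the derivative of
`y ↦ (1 − 3a² − 2a(1−a²)y)/(y² + (2 − ay)²)`. -/
theorem hker_line_integral_zero (a : ℝ) (ha : 0 < a) (ha' : a < 1) :
    Integrable (fun y : ℝ => hker a y (2 - a * y)) ∧
    (∫ y : ℝ, hker a y (2 - a * y)) = 0 ∧
    (∀ y : ℝ, HasDerivAt
      (fun z : ℝ => (1 - 3 * a ^ 2 - 2 * a * (1 - a ^ 2) * z) / (z ^ 2 + (2 - a * z) ^ 2))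
      (a * (1 + a ^ 2) * hker a y (2 - a * y)) y) := by
  have ha0 : a ≠ 0 := ha.ne'
  have hc : (0:ℝ) < (1 - a) ^ 2 := pow_pos (by linarith) 2
  have hb : (0:ℝ) ≤ a⁻¹ - a := by
    nlinarith [mul_inv_cancel₀ ha0]
  have hQge : ∀ y : ℝ, (1 - a) ^ 2 * (1 + y ^ 2) ≤ y ^ 2 + (2 - a * y) ^ 2 := by
    intro y; nlinarith [sq_nonneg (y - 1), sq_nonneg y, sq_nonneg (a * y)]
  have hQpos : ∀ y : ℝ, 0 < y ^ 2 + (2 - a * y) ^ 2 := by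
    intro y; have := hQge y; nlinarith [sq_nonneg y]
  set K : ℝ := 1 + (a⁻¹ - a) / 2 with hKdef
  have hK : (0:ℝ) ≤ K := by simp only [hKdef]; linarith
  -- derivative identity
  have hderiv : ∀ y : ℝ, HasDerivAt
      (fun z : ℝ => (1 - 3 * a ^ 2 - 2 * a * (1 - a ^ 2) * z) / (z ^ 2 + (2 - a * z) ^ 2))
      (a * (1 + a ^ 2) * hker a y (2 - a * y)) y := by
    intro y
    have hQ : (y ^ 2 + (2 - a * y) ^ 2) ≠ 0 := (hQpos y).ne'
    have h1 : HasDerivAt (fun z : ℝ => 1 - 3 * a ^ 2 - 2 * a * (1 - a ^ 2) * z)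
        (-(2 * a * (1 - a ^ 2))) y := by
      simpa using ((hasDerivAt_id y).const_mul (2 * a * (1 - a ^ 2))).const_sub
        (1 - 3 * a ^ 2)
    have hin : HasDerivAt (fun z : ℝ => 2 - a * z) (-a) y := by
      simpa using ((hasDerivAt_id y).const_mul a).const_sub 2
    have h2 : HasDerivAt (fun z : ℝ => z ^ 2 + (2 - a * z) ^ 2)
        (2 * y + 2 * (2 - a * y) * (-a)) y := by
      have := (hasDerivAt_pow 2 y).add (hin.pow 2)
      norm_num at this
      exact this.congr_deriv (by ring)
    have := h1.div h2 hQ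
    refine this.congr_deriv ?_
    rw [hker]
    field_simp
    ring
  -- pointwise bound
  have hbound : ∀ y : ℝ, ‖hker a y (2 - a * y)‖ ≤
      (K / (1 - a) ^ 2) * (1 + y ^ 2)⁻¹ := by
    intro y
    set r := 2 - a * y with hr
    have hQ := hQpos y
    have hN : |y ^ 2 - r ^ 2 - (a⁻¹ - a) * y * r| ≤ K * (y ^ 2 + r ^ 2) := by
      rw [abs_le, hKdef]
      constructor <;>
        nlinarith [mul_nonneg hb (sq_nonneg (y - r)), mul_nonneg hb (sq_nonneg (y + r)),
          sq_nonneg y, sq_nonneg r]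
    have he : ‖hker a y r‖ = |y ^ 2 - r ^ 2 - (a⁻¹ - a) * y * r| / (y ^ 2 + r ^ 2) ^ 2 := by
      rw [hker, Real.norm_eq_abs, abs_div,
        abs_of_nonneg (by positivity : (0:ℝ) ≤ (y ^ 2 + r ^ 2) ^ 2)]
    rw [he]
    calc |y ^ 2 - r ^ 2 - (a⁻¹ - a) * y * r| / (y ^ 2 + r ^ 2) ^ 2
        ≤ K * (y ^ 2 + r ^ 2) / (y ^ 2 + r ^ 2) ^ 2 := by gcongr
      _ = K / (y ^ 2 + r ^ 2) := by
          have hQ' : (y ^ 2 + r ^ 2) ≠ 0 := by rw [hr]; exact (hQpos y).ne'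
          field_simp [hQ']
      _ ≤ K / ((1 - a) ^ 2 * (1 + y ^ 2)) :=
          div_le_div_of_nonneg_left hK (by positivity) (hQge y)
      _ = (K / (1 - a) ^ 2) * (1 + y ^ 2)⁻¹ := by
          rw [div_mul_eq_mul_div, ← div_div]
          ring
  have hcont : Continuous (fun y : ℝ => hker a y (2 - a * y)) := by
    unfold hker
    exact Continuous.div (by continuity) (by continuity)
      (fun y => pow_ne_zero 2 (hQpos y).ne')
  have hint : Integrable (fun y : ℝ => hker a y (2 - a * y)) := by
    refine Integrable.mono' (integrable_inv_one_add_sq.const_mul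
      (K / (1 - a) ^ 2)) hcont.aestronglyMeasurable ?_
    filter_upwards with y using hbound y
  -- limits at infinity
  have htend : ∀ l : Filter ℝ, Tendsto (fun y : ℝ => |y|) l atTop →
      Tendsto (fun z : ℝ => (1 - 3 * a ^ 2 - 2 * a * (1 - a ^ 2) * z) /
        (z ^ 2 + (2 - a * z) ^ 2)) l (𝓝 0) := by
    intro l hl
    have hM0 : (0:ℝ) ≤ 2 * a * (1 - a ^ 2) := by nlinarith
    set M : ℝ := |1 - 3 * a ^ 2| + 2 * a * (1 - a ^ 2) with hMdef
    have hM : (0:ℝ) ≤ M := by positivity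
    have hg : Tendsto (fun y : ℝ => (M / (1 - a) ^ 2) * |y|⁻¹) l (𝓝 0) := by
      have := (tendsto_inv_atTop_zero.comp hl).const_mul (M / (1 - a) ^ 2)
      simpa [Function.comp] using this
    refine squeeze_zero_norm' ?_ hg
    filter_upwards [hl.eventually_ge_atTop 1] with y hy
    have hypos : (0:ℝ) < |y| := lt_of_lt_of_le one_pos hy
    have hQ := hQpos y
    have hnum : |1 - 3 * a ^ 2 - 2 * a * (1 - a ^ 2) * y| ≤ M * |y| := by
      calc |1 - 3 * a ^ 2 - 2 * a * (1 - a ^ 2) * y|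
          ≤ |1 - 3 * a ^ 2| + |2 * a * (1 - a ^ 2) * y| := abs_sub _ _
        _ ≤ |1 - 3 * a ^ 2| * |y| + 2 * a * (1 - a ^ 2) * |y| := by
            rw [abs_mul, abs_of_nonneg hM0]
            have h3 : |1 - 3 * a ^ 2| * 1 ≤ |1 - 3 * a ^ 2| * |y| :=
              mul_le_mul_of_nonneg_left hy (abs_nonneg _)
            linarith
        _ = M * |y| := by rw [hMdef]; ring
    have hQ2 : (1 - a) ^ 2 * |y| ^ 2 ≤ y ^ 2 + (2 - a * y) ^ 2 := by
      rw [sq_abs]; have := hQge y; nlinarith [sq_nonneg y]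
    have he : ‖(1 - 3 * a ^ 2 - 2 * a * (1 - a ^ 2) * y) / (y ^ 2 + (2 - a * y) ^ 2)‖
        = |1 - 3 * a ^ 2 - 2 * a * (1 - a ^ 2) * y| / (y ^ 2 + (2 - a * y) ^ 2) := by
      rw [Real.norm_eq_abs, abs_div, abs_of_nonneg hQ.le]
    rw [he]
    calc |1 - 3 * a ^ 2 - 2 * a * (1 - a ^ 2) * y| / (y ^ 2 + (2 - a * y) ^ 2)
        ≤ (M * |y|) / ((1 - a) ^ 2 * |y| ^ 2) :=
          div_le_div₀ (by positivity) hnum (by positivity) hQ2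
      _ = M / ((1 - a) ^ 2 * |y|) := by
          rw [div_eq_div_iff (by positivity) (by positivity)]; ring
      _ = (M / (1 - a) ^ 2) * |y|⁻¹ := by
          rw [← div_div, div_eq_mul_inv]
  have htop := htend atTop tendsto_abs_atTop_atTop
  have hbot := htend atBot tendsto_abs_atBot_atTop
  refine ⟨hint, ?_, hderiv⟩
  have key := integral_of_hasDerivAt_of_tendsto hderiv
    (hint.const_mul (a * (1 + a ^ 2))) hbot htop
  rw [integral_const_mul] at key
  have hk : a * (1 + a ^ 2) ≠ 0 := by positivity
  have key' : a * (1 + a ^ 2) * ∫ y : ℝ, hker a y (2 - a * y) = 0 := by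
    simpa using key
  rcases mul_eq_zero.mp key' with h | h
  · exact absurd h hk
  · exact h
end

section
/- Let a ∈ (0,3/10], b ∈ [−a, a), and s₀ < 0. Then ∫_{s₀−a}^{s₀−b} g_a(s) ds > ∫_b^a g_a(s) ds. -/
set_option maxHeartbeats 1000000

lemma gfun_continuous (a : ℝ) : Continuous (gfun a) := by
  apply Continuous.div (by continuity) (by continuity)
  intro s; positivity

lemma rest_pos {p s2 s4 : ℝ} (hp0 : 0 ≤ p) (hp : p ≤ 9/100) (hs20 : 0 ≤ s2)
    (hs2 : s2 ≤ 18/100) (hs40 : 0 ≤ s4) (hs4 : s4 ≤ 162/10000) :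
    0 < 6 - 2*s2 - 20*p - 18*p*s2 - 24*p^2 - 6*p*s4 - 6*p^2*s2 + 2*p^3*s2 + 2*p^4 := by
  nlinarith [mul_nonneg hp0 hs20, mul_nonneg hp0 hs40, mul_nonneg (mul_nonneg hp0 hp0) hs20,
    mul_nonneg (mul_nonneg (mul_nonneg hp0 hp0) hp0) hs20,
    mul_nonneg (mul_nonneg hp0 hp0) (mul_nonneg hp0 hp0),
    mul_nonneg (sub_nonneg.2 hp) hs20, mul_nonneg (sub_nonneg.2 hp) hs40,
    mul_nonneg hp0 (sub_nonneg.2 hs2), mul_nonneg hp0 hp0]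

lemma B_nonneg {p s2 s4 : ℝ} (hp0 : 0 ≤ p) (hp : p ≤ 9/100) (hs20 : 0 ≤ s2)
    (hs40 : 0 ≤ s4) (hps : p^2 ≤ s4) :
    0 ≤ 6 + 3*s2 + s4 - 8*p^2 - 3*p^2*s2 := by
  nlinarith [mul_nonneg (mul_nonneg hp0 hp0) hs20, mul_nonneg hp0 hp0,
    mul_nonneg (sub_nonneg.2 hp) hp0, mul_nonneg hs20 (mul_nonneg hp0 hp0)]

lemma gfun_mono {a v w : ℝ} (ha : 0 < a) (ha' : a ≤ 3 / 10)
    (hw : -a ≤ w) (hvw : w < v) (hv : v ≤ 0) : gfun a v < gfun a w := by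
  have ha0 : a ≠ 0 := ne_of_gt ha
  unfold gfun
  rw [div_lt_div_iff₀ (by positivity) (by positivity)]
  set A := a⁻¹ - a with hAdef
  have haA : a * A = 1 - a^2 := by rw [hAdef, mul_sub, mul_inv_cancel₀ ha0]; ring
  have hApos : 0 < A := by
    by_contra h
    push_neg at h
    nlinarith [mul_nonpos_of_nonneg_of_nonpos ha.le h]
  have hw0 : w < 0 := lt_of_lt_of_le hvw hv
  have hwa : -(3/10) ≤ w := by linarith
  have hv2 : v^2 ≤ 9/100 := by nlinarith
  have hw2 : w^2 ≤ 9/100 := by nlinarith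
  have hp0 : 0 ≤ v*w := by nlinarith
  have hp : v*w ≤ 9/100 := by nlinarith
  have hv4 : v^4 ≤ (9/100) * v^2 := by nlinarith [sq_nonneg v]
  have hw4 : w^4 ≤ (9/100) * w^2 := by nlinarith [sq_nonneg w]
  have hs4 : (v*w)^2 ≤ v^4 + w^4 := by nlinarith [sq_nonneg (v^2 - w^2), sq_nonneg (v*w)]
  have hB := B_nonneg hp0 hp (by positivity : (0:ℝ) ≤ v^2 + w^2)
    (by positivity : (0:ℝ) ≤ v^4 + w^4) hs4
  have hApart : 0 ≤ A * (-(v+w)) * (6 + 3*(v^2+w^2) + (v^4 + w^4) - 8*(v*w)^2 - 3*(v*w)^2*(v^2+w^2)) :=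
    mul_nonneg (mul_nonneg hApos.le (by linarith)) hB
  have hrest := rest_pos hp0 hp (by positivity : (0:ℝ) ≤ v^2 + w^2) (by linarith)
    (by positivity : (0:ℝ) ≤ v^4 + w^4) (by linarith)
  have hK : 0 < 6 - 2*w^2 - 20*v*w - 18*v*w^3 - 6*v*w^5 - 2*v^2 - 24*v^2*w^2 - 6*v^2*w^4
      - 18*v^3*w + 2*v^3*w^5 - 6*v^4*w^2 + 2*v^4*w^4 - 6*v^5*w + 2*v^5*w^3
      - 6*A*w - 3*A*w^3 - A*w^5 - 6*A*v - 3*A*v*w^2 - A*v*w^4 - 3*A*v^2*w + 8*A*v^2*w^3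
      + 3*A*v^2*w^5 - 3*A*v^3 + 8*A*v^3*w^2 + 3*A*v^3*w^4 - A*v^4*w + 3*A*v^4*w^3
      - A*v^5 + 3*A*v^5*w^2 := by linarith [hApart, hrest]
  nlinarith [mul_pos (sub_pos.2 hvw) hK]

lemma gfun_tail {a w : ℝ} (ha : 0 < a) (ha' : a ≤ 3 / 10) (hw : w ≤ -a) :
    gfun a (-a) ≤ gfun a w := by
  have ha0 : a ≠ 0 := ne_of_gt ha
  unfold gfun
  rw [div_le_div_iff₀ (by positivity) (by positivity)]
  have haA' : a * (a⁻¹ - a) = 1 - a^2 := by field_simp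
  generalize hA : a⁻¹ - a = A at *
  have haA : a * A = 1 - a^2 := haA'
  have hA3 : 3 ≤ A := by
    by_contra h
    push_neg at h
    nlinarith [mul_lt_mul_of_pos_left h ha]
  obtain ⟨u, hu0, rfl⟩ : ∃ u, 0 ≤ u ∧ w = -a - u := ⟨-a - w, by linarith, by ring⟩
  have e2 : a^2*A = a*(1-a^2) := by rw [← haA]; ring
  have e3 : a^3*A = a^2*(1-a^2) := by rw [← haA]; ring
  have e4 : a^4*A = a^3*(1-a^2) := by rw [← haA]; ring
  have e5 : a^5*A = a^4*(1-a^2) := by rw [← haA]; ring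
  have e6 : a^6*A = a^5*(1-a^2) := by rw [← haA]; ring
  have e7 : a^7*A = a^6*(1-a^2) := by rw [← haA]; ring
  have ha2 : a^2 ≤ 9/100 := by nlinarith
  have ha3 : a^3 ≤ 27/1000 := by nlinarith
  have ha4 : a^4 ≤ 81/10000 := by nlinarith
  have ha5 : a^5 ≤ 243/100000 := by nlinarith
  have ha6 : a^6 ≤ 729/1000000 := by nlinarith
  have ha7 : a^7 ≤ 2187/10000000 := by nlinarith
  have hp3 : (0:ℝ) ≤ a^3 := by positivity
  have hp5 : (0:ℝ) ≤ a^5 := by positivity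
  have hp7 : (0:ℝ) ≤ a^7 := by positivity
  have ha8 : (0:ℝ) ≤ a^8 := by positivity
  have hc1 : 0 ≤ 6 + 12*a*A - 24*a^2 + 12*a^3*A - 60*a^4 - 12*a^5*A - 24*a^6 - 12*a^7*A + 6*a^8 := by
    nlinarith [haA, e3, e5, e7]
  have hc2 : 6 ≤ 6*A - 24*a + 18*a^2*A - 120*a^3 - 30*a^4*A - 72*a^5 - 42*a^6*A + 24*a^7 := by
    nlinarith [hA3, e2, e4, e6]
  have hc3 : -1 ≤ -2 + 12*a*A - 78*a^2 - 16*a^3*A - 102*a^4 - 60*a^5*A + 38*a^6 := by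
    nlinarith [haA, e3, e5]
  have hc4 : 1/10 ≤ 3*A - 18*a + 6*a^2*A - 84*a^3 - 45*a^4*A + 30*a^5 := by
    nlinarith [hA3, e2, e4, ha3, hp5]
  have hc5 : 0 ≤ 6*a*A - 36*a^2 - 18*a^3*A + 12*a^4 := by
    nlinarith [haA, e3]
  have hc6 : 0 ≤ A - 6*a - 3*a^2*A + 2*a^3 := by
    nlinarith [hA3, e2]
  have t1 : 0 ≤ (6 + 12*a*A - 24*a^2 + 12*a^3*A - 60*a^4 - 12*a^5*A - 24*a^6 - 12*a^7*A + 6*a^8)*u :=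
    mul_nonneg hc1 hu0
  have t2 : 6*u^2 ≤ (6*A - 24*a + 18*a^2*A - 120*a^3 - 30*a^4*A - 72*a^5 - 42*a^6*A + 24*a^7)*u^2 :=
    mul_le_mul_of_nonneg_right hc2 (sq_nonneg u)
  have t3 : -1*u^3 ≤ (-2 + 12*a*A - 78*a^2 - 16*a^3*A - 102*a^4 - 60*a^5*A + 38*a^6)*u^3 :=
    mul_le_mul_of_nonneg_right hc3 (pow_nonneg hu0 3)
  have t4 : (1/10)*u^4 ≤ (3*A - 18*a + 6*a^2*A - 84*a^3 - 45*a^4*A + 30*a^5)*u^4 :=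
    mul_le_mul_of_nonneg_right hc4 (pow_nonneg hu0 4)
  have t5 : 0 ≤ (6*a*A - 36*a^2 - 18*a^3*A + 12*a^4)*u^5 := mul_nonneg hc5 (pow_nonneg hu0 5)
  have t6 : 0 ≤ (A - 6*a - 3*a^2*A + 2*a^3)*u^6 := mul_nonneg hc6 (pow_nonneg hu0 6)
  have base : 0 ≤ 6*u^2 - 1*u^3 + (1/10)*u^4 := by
    nlinarith [sq_nonneg (u^2 - 5*u), sq_nonneg u]
  have hident : (2 * (-a-u) ^ 3 + 3 * A * (-a-u) ^ 2 - 6 * (-a-u) - A) * (1 + (-a) ^ 2) ^ 3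
      - (2 * (-a) ^ 3 + 3 * A * (-a) ^ 2 - 6 * (-a) - A) * (1 + (-a-u) ^ 2) ^ 3
      = (6 + 12*a*A - 24*a^2 + 12*a^3*A - 60*a^4 - 12*a^5*A - 24*a^6 - 12*a^7*A + 6*a^8)*u
      + (6*A - 24*a + 18*a^2*A - 120*a^3 - 30*a^4*A - 72*a^5 - 42*a^6*A + 24*a^7)*u^2
      + (-2 + 12*a*A - 78*a^2 - 16*a^3*A - 102*a^4 - 60*a^5*A + 38*a^6)*u^3
      + (3*A - 18*a + 6*a^2*A - 84*a^3 - 45*a^4*A + 30*a^5)*u^4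
      + (6*a*A - 36*a^2 - 18*a^3*A + 12*a^4)*u^5
      + (A - 6*a - 3*a^2*A + 2*a^3)*u^6 := by ring
  linarith [t1, t2, t3, t4, t5, t6, base, hident]

lemma gfun_mid {a v : ℝ} (ha : 0 < a) (ha' : a ≤ 3 / 10) (hv : 0 ≤ v) (hv' : v < a) :
    gfun a v < gfun a (-a) := by
  have ha0 : a ≠ 0 := ne_of_gt ha
  have ha2 : a^2 ≤ 9/100 := by nlinarith
  have step1 : gfun a v ≤ gfun a 0 := by
    unfold gfun
    rw [div_le_div_iff₀ (by positivity) (by positivity)]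
    have haA' : a * (a⁻¹ - a) = 1 - a^2 := by field_simp
    generalize hA : a⁻¹ - a = A at *
    have haA : a * A = 1 - a^2 := haA'
    rw [← sub_nonpos]
    have hva : v^2 ≤ a*v := by nlinarith
    have hv2a : v^2 ≤ a^2 := by nlinarith
    have hv4a : v^4 ≤ (9/100)*a^2 := by
      nlinarith [mul_le_mul hv2a hv2a (sq_nonneg v) (sq_nonneg a),
        mul_le_mul_of_nonneg_right ha2 (sq_nonneg a)]
    have h1a : (0:ℝ) ≤ 1 - a^2 := by nlinarith
    have key : a * ((2 * v ^ 3 + 3 * A * v ^ 2 - 6 * v - A) * (1 + 0 ^ 2) ^ 3 -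
        (2 * 0 ^ 3 + 3 * A * 0 ^ 2 - 6 * 0 - A) * (1 + v ^ 2) ^ 3) ≤ 0 := by
      have hident : a * ((2 * v ^ 3 + 3 * A * v ^ 2 - 6 * v - A) * (1 + 0 ^ 2) ^ 3 -
          (2 * 0 ^ 3 + 3 * A * 0 ^ 2 - 6 * 0 - A) * (1 + v ^ 2) ^ 3)
          = 2*a*v^3 - 6*a*v + (a*A)*v^2*(6 + 3*v^2 + v^4) := by ring
      rw [hident, haA]
      have h1 : (1-a^2)*v^2*(6 + 3*v^2 + v^4) ≤ (1-a^2)*(a*v)*(6 + 3*v^2 + v^4) := by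
        have hfac : 0 ≤ (1-a^2) * (6 + 3*v^2 + v^4) := mul_nonneg h1a (by positivity)
        nlinarith [mul_le_mul_of_nonneg_left hva hfac]
      have h2 : 2*a*v^3 - 6*a*v + (1-a^2)*(a*v)*(6 + 3*v^2 + v^4) ≤ 0 := by
        have hb : 2*v^2 - 6 + (1-a^2)*(6 + 3*v^2 + v^4) ≤ 0 := by
          nlinarith [mul_nonneg (sq_nonneg a) (sq_nonneg v), mul_nonneg (sq_nonneg a) (sq_nonneg (v^2))]
        have hav : 0 ≤ a*v := mul_nonneg ha.le hv
        nlinarith [mul_nonpos_of_nonneg_of_nonpos hav hb]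
      linarith
    nlinarith [key, ha]
  have step2 : gfun a 0 < gfun a (-a) := by
    unfold gfun
    rw [div_lt_div_iff₀ (by positivity) (by positivity)]
    have haA' : a * (a⁻¹ - a) = 1 - a^2 := by field_simp
    generalize hA : a⁻¹ - a = A at *
    have haA : a * A = 1 - a^2 := haA'
    rw [← sub_pos]
    have hident : (2 * (-a) ^ 3 + 3 * A * (-a) ^ 2 - 6 * (-a) - A) * (1 + 0 ^ 2) ^ 3 -
        (2 * 0 ^ 3 + 3 * A * 0 ^ 2 - 6 * 0 - A) * (1 + (-a) ^ 2) ^ 3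
        = -2*a^3 + 6*a + (a*A)*(6*a + 3*a^3 + a^5) := by ring
    rw [hident, haA]
    have h1 : -2*a^3 + 6*a + (1 - a^2)*(6*a + 3*a^3 + a^5) = a*(12 - 5*a^2 - 2*a^4 - a^6) := by ring
    rw [h1]
    have h2 : (0:ℝ) < 12 - 5*a^2 - 2*a^4 - a^6 := by
      nlinarith [mul_le_mul_of_nonneg_right ha2 (sq_nonneg a),
        mul_le_mul_of_nonneg_right ha2 (mul_nonneg (sq_nonneg a) (sq_nonneg a))]
    positivity
  exact lt_of_le_of_lt step1 step2

lemma gfun_refl {a v : ℝ} (ha : 0 < a) (ha' : a ≤ 3 / 10) (hv : 0 ≤ v) (hv' : v ≤ a) :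
    gfun a v ≤ gfun a (-v) := by
  unfold gfun
  rw [div_le_div_iff₀ (by positivity) (by positivity)]
  have hv2 : v^2 ≤ 9/100 := by nlinarith
  have h3 : 0 ≤ 12*v - 4*v^3 := by
    nlinarith [mul_le_mul_of_nonneg_left hv2 (show (0:ℝ) ≤ 4*v by linarith)]
  nlinarith [mul_nonneg h3 (pow_nonneg (by positivity : (0:ℝ) ≤ 1 + v^2) 3)]

/-- The key pointwise inequality: if `|v| < a` and `w < min v (-v)`, then `g(v) < g(w)`. -/
lemma gfun_key {a v w : ℝ} (ha : 0 < a) (ha' : a ≤ 3 / 10)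
    (hv1 : -a < v) (hv2 : v < a) (hw1 : w < v) (hw2 : w + v < 0) :
    gfun a v < gfun a w := by
  rcases le_or_gt v 0 with hv0 | hv0
  · rcases le_or_gt (-a) w with hwa | hwa
    · exact gfun_mono ha ha' hwa hw1 hv0
    · exact lt_of_lt_of_le (gfun_mono ha ha' le_rfl hv1 hv0) (gfun_tail ha ha' hwa.le)
  · have hwv : w < -v := by linarith
    rcases le_or_gt (-a) w with hwa | hwa
    · exact lt_of_le_of_lt (gfun_refl ha ha' hv0.le hv2.le)
        (gfun_mono ha ha' hwa hwv (by linarith))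
    · exact lt_of_lt_of_le (gfun_mid ha ha' hv0.le hv2) (gfun_tail ha ha' hwa.le)

/-- For `a ∈ (0, 3/10]`, `b ∈ [−a, a)` and `s₀ < 0`:
`∫_{s₀−a}^{s₀−b} g_a(s) ds > ∫_b^a g_a(s) ds`. -/
theorem gfun_shifted_integral_gt (a b s₀ : ℝ) (ha : 0 < a) (ha' : a ≤ 3 / 10)
    (hb : -a ≤ b) (hb' : b < a) (hs₀ : s₀ < 0) :
    (∫ s in b..a, gfun a s) < ∫ s in (s₀ - a)..(s₀ - b), gfun a s := by
  have hcont : Continuous (gfun a) := gfun_continuous a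
  have hcont' : Continuous (fun t => gfun a (s₀ - t)) := hcont.comp (by continuity)
  have hsub : (∫ s in (s₀ - a)..(s₀ - b), gfun a s) = ∫ t in b..a, gfun a (s₀ - t) :=
    (intervalIntegral.integral_comp_sub_left (gfun a) s₀).symm
  rw [hsub]
  have main : ∀ c : ℝ, -a ≤ c → c < a → s₀ - c ≤ c →
      (∫ t in c..a, gfun a t) < ∫ t in c..a, gfun a (s₀ - t) := by
    intro c hc1 hc2 hc3
    rw [← sub_pos, ← intervalIntegral.integral_sub (hcont'.intervalIntegrable c a)
      (hcont.intervalIntegrable c a)]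
    apply intervalIntegral.intervalIntegral_pos_of_pos_on
      ((hcont'.sub hcont).intervalIntegrable c a)
    · intro t ht
      obtain ⟨ht1, ht2⟩ := ht
      have : gfun a t < gfun a (s₀ - t) := by
        apply gfun_key ha ha' (by linarith) ht2 (by linarith) (by linarith)
      simp only [Pi.sub_apply]
      linarith
    · exact hc2
  rcases le_or_gt (s₀ - b) b with hc | hc
  · exact main b hb hb' hc
  · set c := s₀ - b with hcdef
    have hca : c < a := by
      have : -b ≤ a := by linarith
      linarith
    have hcb : -a ≤ c := by linarith
    have h1 : (∫ t in b..c, gfun a (s₀ - t)) = ∫ t in b..c, gfun a t := by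
      have := intervalIntegral.integral_comp_sub_left (gfun a) s₀ (a := b) (b := c)
      rw [this, hcdef]
      norm_num
    have h2 : (∫ t in b..a, gfun a (s₀ - t))
        = (∫ t in b..c, gfun a (s₀ - t)) + ∫ t in c..a, gfun a (s₀ - t) :=
      (intervalIntegral.integral_add_adjacent_intervals (hcont'.intervalIntegrable b c)
        (hcont'.intervalIntegrable c a)).symm
    have h3 : (∫ t in b..a, gfun a t)
        = (∫ t in b..c, gfun a t) + ∫ t in c..a, gfun a t :=
      (intervalIntegral.integral_add_adjacent_intervals (hcont.intervalIntegrable b c)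
        (hcont.intervalIntegrable c a)).symm
    have h4 := main c hcb hca (by simp [hcdef]; linarith)
    rw [h2, h3, h1]
    linarith
end
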